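/- arXiv:2605.25380 — 6 statements merged into one kernel-verified Lean document; each statement's English description precedes it below -/
import Mathlib

section
/- Let n ≥ 2 and p ≥ 2 be integers and let F : S_n × S_n → ℝ satisfy the rank-invariance property F(σ∘ρ, τ∘ρ) = F(σ, τ) for all σ, τ, ρ ∈ S_n. Let π_1, …, π_p be independent random permutations, each uniformly distributed on S_n. Set μ_F = (1/(n!)²) Σ_{σ,τ ∈ S_n} F(σ,τ), F̃ = F − μ_F, and for a positive integer q set μ_q = E[F̃(π_1,π_2)^q] and S_q = Σ_{1 ≤ s < t ≤ p} (F̃(π_s,π_t)^q − μ_q). Then E[S_q] = 0, and for any positive integers q_1, q_2, Cov(S_{q_1}, S_{q_2}) = C(p,2) · (E[F̃(π_1,π_2)^{q_1+q_2}] − μ_{q_1} μ_{q_2}), where C(p,2) = p(p−1)/2. -/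
open Finset Equiv

lemma sum_update_eq {ι G : Type*} [Fintype ι] [DecidableEq ι] [Fintype G]
    (w : ι) (f : (ι → G) → ℝ) :
    ∑ π : ι → G, ∑ x : G, f (Function.update π w x)
      = (Fintype.card G : ℝ) * ∑ π : ι → G, f π := by
  have key : ∑ pr : (ι → G) × G, f (Function.update pr.1 w pr.2)
      = ∑ pr : (ι → G) × G, f pr.1 :=
    Fintype.sum_bijective (fun pr : (ι → G) × G => (Function.update pr.1 w pr.2, pr.1 w))
      (Function.Involutive.bijective (by
        intro pr
        simp [Function.update_idem]))
      _ _ (fun pr => rfl)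
  rw [Fintype.sum_prod_type] at key
  rw [key, Fintype.sum_prod_type, Finset.mul_sum]
  simp [Finset.sum_const, nsmul_eq_mul, mul_comm]

lemma card_lt_pairs (p : ℕ) :
    (Finset.univ.filter (fun st : Fin p × Fin p => st.1 < st.2)).card = p.choose 2 := by
  rw [Finset.card_filter, Fintype.sum_prod_type]
  have h1 : ∀ a : Fin p, (∑ b : Fin p, if a < b then 1 else 0) = p - 1 - (a:ℕ) := by
    intro a
    rw [← Finset.card_filter]
    have : Finset.univ.filter (fun b : Fin p => a < b) = Finset.Ioi a := by
      ext b; simp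
    rw [this, Fin.card_Ioi]
  simp only [h1]
  rw [Fin.sum_univ_eq_sum_range, ← Finset.sum_range_reflect]
  have h2 : ∀ i ∈ Finset.range p, p - 1 - (p - 1 - i) = i := by
    intro i hi; rw [Finset.mem_range] at hi; omega
  rw [Finset.sum_congr rfl h2]
  have h3 := Finset.sum_range_id_mul_two p
  rw [Nat.choose_two_right]
  omega

/-- For a rank-invariant kernel `F` on pairs of permutations, the
power-sum statistic `S_q` over `p` independent uniform random permutations has
null mean zero, and the covariance of `S_{q₁}` and `S_{q₂}` equals
`C(p,2) · (E[F̃^{q₁+q₂}] − μ_{q₁} μ_{q₂})`. -/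
theorem stmt0 (n p : ℕ) (hn : 2 ≤ n) (hp : 2 ≤ p)
    (F : Perm (Fin n) → Perm (Fin n) → ℝ)
    (hF : ∀ σ τ ρ : Perm (Fin n), F (σ * ρ) (τ * ρ) = F σ τ)
    (E : ((Fin p → Perm (Fin n)) → ℝ) → ℝ)
    (hE : ∀ G, E G = (1 / (n.factorial : ℝ) ^ p) * ∑ π : Fin p → Perm (Fin n), G π)
    (μF : ℝ)
    (hμF : μF = (1 / (n.factorial : ℝ) ^ 2) *
      ∑ σ : Perm (Fin n), ∑ τ : Perm (Fin n), F σ τ)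
    (Ft : Perm (Fin n) → Perm (Fin n) → ℝ)
    (hFt : ∀ σ τ, Ft σ τ = F σ τ - μF)
    (μ : ℕ → ℝ)
    (hμ : ∀ q, μ q = (1 / (n.factorial : ℝ) ^ 2) *
      ∑ σ : Perm (Fin n), ∑ τ : Perm (Fin n), (Ft σ τ) ^ q)
    (S : ℕ → (Fin p → Perm (Fin n)) → ℝ)
    (hS : ∀ q π, S q π =
      ∑ st ∈ Finset.univ.filter (fun st : Fin p × Fin p => st.1 < st.2),
        ((Ft (π st.1) (π st.2)) ^ q - μ q))
    (q₁ q₂ : ℕ) (hq₁ : 0 < q₁) (hq₂ : 0 < q₂) :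
    (∀ q, 0 < q → E (S q) = 0) ∧
    E (fun π => S q₁ π * S q₂ π) - E (S q₁) * E (S q₂)
      = (p.choose 2 : ℝ) * (μ (q₁ + q₂) - μ q₁ * μ q₂) := by
  have hN0 : ((n.factorial : ℝ)) ≠ 0 := Nat.cast_ne_zero.mpr (Nat.factorial_ne_zero n)
  have hNp0 : ((n.factorial : ℝ)) ^ p ≠ 0 := pow_ne_zero _ hN0
  have hNcard : (Fintype.card (Perm (Fin n)) : ℝ) = (n.factorial : ℝ) := by
    rw [Fintype.card_perm, Fintype.card_fin]
  have hPicard : (Fintype.card (Fin p → Perm (Fin n)) : ℝ) = ((n.factorial : ℝ)) ^ p := by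
    rw [Fintype.card_fun, Fintype.card_perm, Fintype.card_fin, Fintype.card_fin]
    push_cast; ring
  -- Lemma A : row sums are constant
  have hA : ∀ (q : ℕ) (σ : Perm (Fin n)),
      ∑ τ : Perm (Fin n), Ft σ τ ^ q = (n.factorial : ℝ) * μ q := by
    intro q
    have h1 : ∀ σ : Perm (Fin n), ∑ τ : Perm (Fin n), Ft σ τ ^ q
        = ∑ τ : Perm (Fin n), Ft 1 τ ^ q := by
      intro σ
      have step : ∀ τ, Ft σ τ = Ft 1 (τ * σ⁻¹) := by
        intro τ
        have h := hF 1 (τ * σ⁻¹) σ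
        rw [one_mul, inv_mul_cancel_right] at h
        rw [hFt, hFt, h]
      calc ∑ τ : Perm (Fin n), Ft σ τ ^ q
          = ∑ τ : Perm (Fin n), Ft 1 (τ * σ⁻¹) ^ q :=
            Finset.sum_congr rfl fun τ _ => by rw [step]
        _ = ∑ τ : Perm (Fin n), Ft 1 τ ^ q :=
            Fintype.sum_equiv (Equiv.mulRight σ⁻¹) _ _ fun τ => rfl
    intro σ
    have hμq : μ q = (1 / (n.factorial : ℝ) ^ 2) *
        ((n.factorial : ℝ) * ∑ τ : Perm (Fin n), Ft 1 τ ^ q) := by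
      rw [hμ]
      congr 1
      calc ∑ σ' : Perm (Fin n), ∑ τ : Perm (Fin n), Ft σ' τ ^ q
          = ∑ _σ' : Perm (Fin n), ∑ τ : Perm (Fin n), Ft 1 τ ^ q :=
            Finset.sum_congr rfl fun σ' _ => h1 σ'
        _ = (n.factorial : ℝ) * ∑ τ : Perm (Fin n), Ft 1 τ ^ q := by
            rw [Finset.sum_const, Finset.card_univ, nsmul_eq_mul, hNcard]
    rw [h1 σ, hμq]
    field_simp
  -- Lemma B : column sums are constant
  have hB : ∀ (q : ℕ) (τ : Perm (Fin n)),
      ∑ σ : Perm (Fin n), Ft σ τ ^ q = (n.factorial : ℝ) * μ q := by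
    intro q
    have h1 : ∀ τ : Perm (Fin n), ∑ σ : Perm (Fin n), Ft σ τ ^ q
        = ∑ σ : Perm (Fin n), Ft σ 1 ^ q := by
      intro τ
      have step : ∀ σ, Ft σ τ = Ft (σ * τ⁻¹) 1 := by
        intro σ
        have h := hF (σ * τ⁻¹) 1 τ
        rw [one_mul, inv_mul_cancel_right] at h
        rw [hFt, hFt, h]
      calc ∑ σ : Perm (Fin n), Ft σ τ ^ q
          = ∑ σ : Perm (Fin n), Ft (σ * τ⁻¹) 1 ^ q :=
            Finset.sum_congr rfl fun σ _ => by rw [step]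
        _ = ∑ σ : Perm (Fin n), Ft σ 1 ^ q :=
            Fintype.sum_equiv (Equiv.mulRight τ⁻¹) _ _ fun σ => rfl
    intro τ
    have hμq : μ q = (1 / (n.factorial : ℝ) ^ 2) *
        ((n.factorial : ℝ) * ∑ σ : Perm (Fin n), Ft σ 1 ^ q) := by
      rw [hμ, Finset.sum_comm]
      congr 1
      calc ∑ τ' : Perm (Fin n), ∑ σ : Perm (Fin n), Ft σ τ' ^ q
          = ∑ _τ' : Perm (Fin n), ∑ σ : Perm (Fin n), Ft σ 1 ^ q :=
            Finset.sum_congr rfl fun τ' _ => h1 τ'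
        _ = (n.factorial : ℝ) * ∑ σ : Perm (Fin n), Ft σ 1 ^ q := by
            rw [Finset.sum_const, Finset.card_univ, nsmul_eq_mul, hNcard]
    rw [h1 τ, hμq]
    field_simp
  -- Core vanishing lemma
  have hD : ∀ (q : ℕ) (s t w : Fin p), s ≠ t → (w = s ∨ w = t) →
      ∀ h : (Fin p → Perm (Fin n)) → ℝ,
      (∀ π x, h (Function.update π w x) = h π) →
      ∑ π : Fin p → Perm (Fin n), (Ft (π s) (π t) ^ q - μ q) * h π = 0 := by
    intro q s t w hst hw h hh
    have key := sum_update_eq w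
      (fun π : Fin p → Perm (Fin n) => (Ft (π s) (π t) ^ q - μ q) * h π)
    have hzero : ∑ π : Fin p → Perm (Fin n), ∑ x : Perm (Fin n),
        (Ft (Function.update π w x s) (Function.update π w x t) ^ q - μ q)
          * h (Function.update π w x) = 0 := by
      rcases hw with rfl | rfl
      · apply Finset.sum_eq_zero
        intro π _
        have hcongr : ∀ x : Perm (Fin n),
            (Ft (Function.update π w x w) (Function.update π w x t) ^ q - μ q)
              * h (Function.update π w x)
            = (Ft x (π t) ^ q - μ q) * h π := by
          intro x
          rw [Function.update_self, Function.update_of_ne (Ne.symm hst), hh]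
        rw [Finset.sum_congr rfl fun x _ => hcongr x, ← Finset.sum_mul]
        have hz : ∑ x : Perm (Fin n), (Ft x (π t) ^ q - μ q) = 0 := by
          rw [Finset.sum_sub_distrib, hB q (π t), Finset.sum_const, Finset.card_univ,
            nsmul_eq_mul, hNcard]
          ring
        rw [hz, zero_mul]
      · apply Finset.sum_eq_zero
        intro π _
        have hcongr : ∀ x : Perm (Fin n),
            (Ft (Function.update π w x s) (Function.update π w x w) ^ q - μ q)
              * h (Function.update π w x)
            = (Ft (π s) x ^ q - μ q) * h π := by
          intro x
          rw [Function.update_self, Function.update_of_ne hst, hh]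
        rw [Finset.sum_congr rfl fun x _ => hcongr x, ← Finset.sum_mul]
        have hz : ∑ x : Perm (Fin n), (Ft (π s) x ^ q - μ q) = 0 := by
          rw [Finset.sum_sub_distrib, hA q (π s), Finset.sum_const, Finset.card_univ,
            nsmul_eq_mul, hNcard]
          ring
        rw [hz, zero_mul]
    have key2 : (Fintype.card (Perm (Fin n)) : ℝ) *
        ∑ π : Fin p → Perm (Fin n), (Ft (π s) (π t) ^ q - μ q) * h π = 0 := by
      rw [← key]; exact hzero
    rw [hNcard] at key2
    rcases mul_eq_zero.mp key2 with h0 | h0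
    · exact absurd h0 hN0
    · exact h0
  -- power sums
  have hE' : ∀ (q : ℕ) (s t : Fin p), s ≠ t →
      ∑ π : Fin p → Perm (Fin n), Ft (π s) (π t) ^ q
        = ((n.factorial : ℝ)) ^ p * μ q := by
    intro q s t hst
    have h0 := hD q s t t hst (Or.inr rfl) (fun _ => 1) (fun _ _ => rfl)
    simp only [mul_one] at h0
    rw [Finset.sum_sub_distrib, Finset.sum_const, Finset.card_univ, nsmul_eq_mul,
      hPicard] at h0
    linarith
  -- Part 1
  have part1 : ∀ q : ℕ, E (S q) = 0 := by
    intro q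
    rw [hE]
    have hz : ∑ π : Fin p → Perm (Fin n), S q π = 0 := by
      calc ∑ π : Fin p → Perm (Fin n), S q π
          = ∑ π : Fin p → Perm (Fin n),
              ∑ st ∈ Finset.univ.filter (fun st : Fin p × Fin p => st.1 < st.2),
                ((Ft (π st.1) (π st.2)) ^ q - μ q) :=
            Finset.sum_congr rfl fun π _ => hS q π
        _ = ∑ st ∈ Finset.univ.filter (fun st : Fin p × Fin p => st.1 < st.2),
              ∑ π : Fin p → Perm (Fin n), ((Ft (π st.1) (π st.2)) ^ q - μ q) :=
            Finset.sum_comm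
        _ = 0 := by
            apply Finset.sum_eq_zero
            intro st hst
            have hlt : st.1 < st.2 := (Finset.mem_filter.mp hst).2
            have h0 := hD q st.1 st.2 st.2 (ne_of_lt hlt) (Or.inr rfl)
              (fun _ => 1) (fun _ _ => rfl)
            simpa using h0
    rw [hz, mul_zero]
  -- diagonal terms
  have hdiag : ∀ s t : Fin p, s ≠ t →
      ∑ π : Fin p → Perm (Fin n),
        (Ft (π s) (π t) ^ q₁ - μ q₁) * (Ft (π s) (π t) ^ q₂ - μ q₂)
      = ((n.factorial : ℝ)) ^ p * (μ (q₁ + q₂) - μ q₁ * μ q₂) := by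
    intro s t hst
    have expand : ∀ π : Fin p → Perm (Fin n),
        (Ft (π s) (π t) ^ q₁ - μ q₁) * (Ft (π s) (π t) ^ q₂ - μ q₂)
        = Ft (π s) (π t) ^ (q₁ + q₂) - μ q₁ * Ft (π s) (π t) ^ q₂
          - μ q₂ * Ft (π s) (π t) ^ q₁ + μ q₁ * μ q₂ := by
      intro π; rw [pow_add]; ring
    rw [Finset.sum_congr rfl fun π _ => expand π]
    rw [Finset.sum_add_distrib, Finset.sum_sub_distrib, Finset.sum_sub_distrib,
      ← Finset.mul_sum, ← Finset.mul_sum,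
      hE' (q₁ + q₂) s t hst, hE' q₁ s t hst, hE' q₂ s t hst,
      Finset.sum_const, Finset.card_univ, nsmul_eq_mul, hPicard]
    ring
  -- off-diagonal terms
  have hoff : ∀ ab ∈ Finset.univ.filter (fun st : Fin p × Fin p => st.1 < st.2),
      ∀ cd ∈ Finset.univ.filter (fun st : Fin p × Fin p => st.1 < st.2), cd ≠ ab →
      ∑ π : Fin p → Perm (Fin n),
        (Ft (π ab.1) (π ab.2) ^ q₁ - μ q₁) * (Ft (π cd.1) (π cd.2) ^ q₂ - μ q₂) = 0 := by
    intro ab hab cd hcd hne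
    obtain ⟨a, b⟩ := ab
    obtain ⟨c, d⟩ := cd
    simp only [Finset.mem_filter] at hab hcd
    have hab' : a < b := hab.2
    have hcd' : c < d := hcd.2
    by_cases hb : b = c ∨ b = d
    · -- integrate out coordinate a
      have hac : a ≠ c ∧ a ≠ d := by
        rcases hb with rfl | rfl
        · exact ⟨ne_of_lt hab', ne_of_lt (lt_trans hab' hcd')⟩
        · refine ⟨?_, ne_of_lt hab'⟩
          intro h
          exact hne (by rw [h])
      exact hD q₁ a b a (ne_of_lt hab') (Or.inl rfl)
        (fun π => Ft (π c) (π d) ^ q₂ - μ q₂)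
        (fun π x => by
          simp only [Function.update_of_ne (Ne.symm hac.1),
            Function.update_of_ne (Ne.symm hac.2)])
    · push_neg at hb
      exact hD q₁ a b b (ne_of_lt hab') (Or.inr rfl)
        (fun π => Ft (π c) (π d) ^ q₂ - μ q₂)
        (fun π x => by
          simp only [Function.update_of_ne (Ne.symm hb.1),
            Function.update_of_ne (Ne.symm hb.2)])
  -- main covariance computation
  have key2 : ∑ π : Fin p → Perm (Fin n), S q₁ π * S q₂ π
      = (p.choose 2 : ℝ) * (((n.factorial : ℝ)) ^ p * (μ (q₁ + q₂) - μ q₁ * μ q₂)) := by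
    calc ∑ π : Fin p → Perm (Fin n), S q₁ π * S q₂ π
        = ∑ π : Fin p → Perm (Fin n),
            ∑ ab ∈ Finset.univ.filter (fun st : Fin p × Fin p => st.1 < st.2),
              ∑ cd ∈ Finset.univ.filter (fun st : Fin p × Fin p => st.1 < st.2),
                (Ft (π ab.1) (π ab.2) ^ q₁ - μ q₁) * (Ft (π cd.1) (π cd.2) ^ q₂ - μ q₂) :=
          Finset.sum_congr rfl fun π _ => by rw [hS, hS, Finset.sum_mul_sum]
      _ = ∑ ab ∈ Finset.univ.filter (fun st : Fin p × Fin p => st.1 < st.2),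
            ∑ π : Fin p → Perm (Fin n),
              ∑ cd ∈ Finset.univ.filter (fun st : Fin p × Fin p => st.1 < st.2),
                (Ft (π ab.1) (π ab.2) ^ q₁ - μ q₁) * (Ft (π cd.1) (π cd.2) ^ q₂ - μ q₂) :=
          Finset.sum_comm
      _ = ∑ ab ∈ Finset.univ.filter (fun st : Fin p × Fin p => st.1 < st.2),
            ∑ cd ∈ Finset.univ.filter (fun st : Fin p × Fin p => st.1 < st.2),
              ∑ π : Fin p → Perm (Fin n),
                (Ft (π ab.1) (π ab.2) ^ q₁ - μ q₁) * (Ft (π cd.1) (π cd.2) ^ q₂ - μ q₂) :=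
          Finset.sum_congr rfl fun ab _ => Finset.sum_comm
      _ = ∑ _ab ∈ Finset.univ.filter (fun st : Fin p × Fin p => st.1 < st.2),
            ((n.factorial : ℝ)) ^ p * (μ (q₁ + q₂) - μ q₁ * μ q₂) := by
          apply Finset.sum_congr rfl
          intro ab hab
          rw [Finset.sum_eq_single_of_mem ab hab (fun cd hcd hne => hoff ab hab cd hcd hne)]
          exact hdiag ab.1 ab.2 (ne_of_lt (Finset.mem_filter.mp hab).2)
      _ = (p.choose 2 : ℝ) * (((n.factorial : ℝ)) ^ p * (μ (q₁ + q₂) - μ q₁ * μ q₂)) := by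
          rw [Finset.sum_const, nsmul_eq_mul, card_lt_pairs]
  refine ⟨fun q _ => part1 q, ?_⟩
  rw [hE, key2, part1 q₁, part1 q₂, mul_zero, sub_zero]
  field_simp
end

section
/- Let n ≥ 2 be an integer and let F : S_n × S_n → ℝ satisfy the rank-invariance property F(σ∘ρ, τ∘ρ) = F(σ, τ) for all σ, τ, ρ ∈ S_n. Let π_1, π_2, π_3 be independent uniform random permutations on S_n, and for a positive integer q set m_q = E[F(π_1,π_2)^q]. Then for any positive integers q_1, q_2, E[(F(π_1,π_2)^{q_1} − m_{q_1})(F(π_1,π_3)^{q_2} − m_{q_2})] = 0; that is, the two overlapping pair statistics F(π_1,π_2)^{q_1} and F(π_1,π_3)^{q_2} are uncorrelated. -/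
open Finset Equiv

lemma key_inv {n : ℕ} (F : Perm (Fin n) → Perm (Fin n) → ℝ)
    (hF : ∀ σ τ ρ : Perm (Fin n), F (σ * ρ) (τ * ρ) = F σ τ)
    (q : ℕ) (π₁ : Perm (Fin n)) :
    ∑ τ : Perm (Fin n), (F π₁ τ) ^ q = ∑ τ : Perm (Fin n), (F 1 τ) ^ q := by
  refine Fintype.sum_equiv (Equiv.mulRight π₁).symm _ _ fun τ => ?_
  have := hF 1 (τ * π₁⁻¹) π₁
  simp only [one_mul, inv_mul_cancel_right] at this
  simp [Equiv.mulRight, this]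

lemma key_zero {n : ℕ} (F : Perm (Fin n) → Perm (Fin n) → ℝ)
    (hF : ∀ σ τ ρ : Perm (Fin n), F (σ * ρ) (τ * ρ) = F σ τ)
    (m : ℕ → ℝ)
    (hm : ∀ q, m q = (1 / (n.factorial : ℝ) ^ 2) *
      ∑ σ : Perm (Fin n), ∑ τ : Perm (Fin n), (F σ τ) ^ q)
    (q : ℕ) (π₁ : Perm (Fin n)) :
    ∑ τ : Perm (Fin n), ((F π₁ τ) ^ q - m q) = 0 := by
  have hcard : (Fintype.card (Perm (Fin n)) : ℝ) = (n.factorial : ℝ) := by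
    rw [Fintype.card_perm]; simp
  have hne : (n.factorial : ℝ) ≠ 0 := Nat.cast_ne_zero.mpr n.factorial_ne_zero
  have hmq : m q = (∑ τ : Perm (Fin n), (F 1 τ) ^ q) / (n.factorial : ℝ) := by
    rw [hm q]
    have : ∀ σ : Perm (Fin n), ∑ τ : Perm (Fin n), (F σ τ) ^ q
        = ∑ τ : Perm (Fin n), (F 1 τ) ^ q := fun σ => key_inv F hF q σ
    rw [Finset.sum_congr rfl (fun σ _ => this σ), Finset.sum_const, Finset.card_univ,
      nsmul_eq_mul, hcard]
    field_simp
  rw [Finset.sum_sub_distrib, key_inv F hF q π₁, Finset.sum_const, Finset.card_univ,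
    nsmul_eq_mul, hcard, hmq]
  field_simp
  ring

/-- For a rank-invariant kernel `F`, the overlapping-pair power
statistics `F(π₁,π₂)^{q₁}` and `F(π₁,π₃)^{q₂}` are uncorrelated under
independent uniform random permutations. -/
theorem stmt1 (n : ℕ) (hn : 2 ≤ n)
    (F : Perm (Fin n) → Perm (Fin n) → ℝ)
    (hF : ∀ σ τ ρ : Perm (Fin n), F (σ * ρ) (τ * ρ) = F σ τ)
    (m : ℕ → ℝ)
    (hm : ∀ q, m q = (1 / (n.factorial : ℝ) ^ 2) *
      ∑ σ : Perm (Fin n), ∑ τ : Perm (Fin n), (F σ τ) ^ q)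
    (q₁ q₂ : ℕ) (hq₁ : 0 < q₁) (hq₂ : 0 < q₂) :
    (1 / (n.factorial : ℝ) ^ 3) *
      ∑ π₁ : Perm (Fin n), ∑ π₂ : Perm (Fin n), ∑ π₃ : Perm (Fin n),
        ((F π₁ π₂) ^ q₁ - m q₁) * ((F π₁ π₃) ^ q₂ - m q₂) = 0 := by
  have : ∀ π₁ : Perm (Fin n),
      ∑ π₂ : Perm (Fin n), ∑ π₃ : Perm (Fin n),
        ((F π₁ π₂) ^ q₁ - m q₁) * ((F π₁ π₃) ^ q₂ - m q₂) = 0 := by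
    intro π₁
    rw [← Finset.sum_mul_sum]
    rw [key_zero F hF m hm q₁ π₁, zero_mul]
  rw [Finset.sum_congr rfl (fun π₁ _ => this π₁), Finset.sum_const]
  simp
end

section
/- For every integer n ≥ 2, the fourth null moment of Spearman's rho satisfies M_{ρ,4}(n) = 3(25n³ − 38n² − 35n + 72) / (25 n (n−1)³ (n+1)). -/
open Finset Equiv

variable {n : ℕ}

lemma exists_perm_map {k : ℕ} (u v : Fin k → Fin n) (hu : Function.Injective u)
    (hv : Function.Injective v) : ∃ σ : Perm (Fin n), ∀ t, σ (u t) = v t := by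
  classical
  have hc : Fintype.card ↥(Set.range u)ᶜ = Fintype.card ↥(Set.range v)ᶜ := by
    rw [Fintype.card_compl_set, Fintype.card_compl_set,
      Set.card_range_of_injective hu, Set.card_range_of_injective hv]
  let e₁ : ↥(Set.range u) ≃ ↥(Set.range v) :=
    (Equiv.ofInjective u hu).symm.trans (Equiv.ofInjective v hv)
  let e₂ : ↥(Set.range u)ᶜ ≃ ↥(Set.range v)ᶜ := Fintype.equivOfCardEq hc
  refine ⟨((Equiv.sumCompl (· ∈ Set.range u)).symm.trans
    ((e₁.sumCongr e₂).trans (Equiv.sumCompl (· ∈ Set.range v)))), fun t => ?_⟩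
  have h1 : (Equiv.sumCompl (· ∈ Set.range u)).symm (u t) = Sum.inl ⟨u t, ⟨t, rfl⟩⟩ :=
    Equiv.sumCompl_symm_apply_of_pos ⟨t, rfl⟩
  simp only [Equiv.trans_apply, h1, Equiv.sumCongr_apply, Sum.map_inl]
  have h2 : e₁ ⟨u t, ⟨t, rfl⟩⟩ = ⟨v t, ⟨t, rfl⟩⟩ := by
    simp only [e₁, Equiv.trans_apply]
    have : (Equiv.ofInjective u hu).symm ⟨u t, ⟨t, rfl⟩⟩ = t := by
      apply (Equiv.ofInjective u hu).injective
      simp [Equiv.apply_ofInjective_symm]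
    rw [this]
    rfl
  exact congrArg Subtype.val h2

lemma inj2 {i j : Fin n} (h : i ≠ j) : Function.Injective ![i, j] := by
  intro a b hab
  fin_cases a <;> fin_cases b <;> simp_all

lemma inj3 {i j k : Fin n} (hij : i ≠ j) (hik : i ≠ k) (hjk : j ≠ k) :
    Function.Injective ![i, j, k] := by
  intro a b hab
  fin_cases a <;> fin_cases b <;> simp_all

lemma inj4 {i j k l : Fin n} (hij : i ≠ j) (hik : i ≠ k) (hil : i ≠ l)
    (hjk : j ≠ k) (hjl : j ≠ l) (hkl : k ≠ l) :
    Function.Injective ![i, j, k, l] := by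
  intro a b hab
  fin_cases a <;> fin_cases b <;> simp_all

lemma erase_image (π : Perm (Fin n)) (s : Finset (Fin n)) (b : Fin n) :
    (s.erase b).image π = (s.image π).erase (π b) :=
  Finset.image_erase π.injective s b

lemma univ_erase_image (π : Perm (Fin n)) (b : Fin n) :
    ((univ : Finset (Fin n)).erase b).image π = univ.erase (π b) := by
  rw [erase_image, Finset.image_univ_equiv]

-- reindex nested sums by a permutation
lemma reindex2 (π : Perm (Fin n)) (F : Fin n → Fin n → ℝ) :
    ∑ b, ∑ c ∈ univ.erase b, F (π b) (π c) = ∑ b, ∑ c ∈ univ.erase b, F b c := by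
  have h1 : ∀ b, ∑ c ∈ univ.erase b, F (π b) (π c) = ∑ c ∈ univ.erase (π b), F (π b) c := by
    intro b
    rw [← univ_erase_image π b, Finset.sum_image (fun x _ y _ h => π.injective h)]
  simp_rw [h1]
  exact Equiv.sum_comp π (fun b => ∑ c ∈ univ.erase b, F b c)

lemma reindex3 (π : Perm (Fin n)) (F : Fin n → Fin n → Fin n → ℝ) :
    ∑ b, ∑ c ∈ univ.erase b, ∑ d ∈ (univ.erase b).erase c, F (π b) (π c) (π d)
      = ∑ b, ∑ c ∈ univ.erase b, ∑ d ∈ (univ.erase b).erase c, F b c d := by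
  have h1 : ∀ b c, ∑ d ∈ (univ.erase b).erase c, F (π b) (π c) (π d)
      = ∑ d ∈ ((univ.erase (π b)).erase (π c)), F (π b) (π c) d := by
    intro b c
    rw [← univ_erase_image π b, ← erase_image, Finset.sum_image (fun x _ y _ h => π.injective h)]
  simp_rw [h1]
  exact reindex2 π (fun b c => ∑ d ∈ (univ.erase b).erase c, F b c d)

lemma reindex4 (π : Perm (Fin n)) (F : Fin n → Fin n → Fin n → Fin n → ℝ) :
    ∑ b, ∑ c ∈ univ.erase b, ∑ d ∈ (univ.erase b).erase c,
        ∑ e ∈ ((univ.erase b).erase c).erase d, F (π b) (π c) (π d) (π e)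
      = ∑ b, ∑ c ∈ univ.erase b, ∑ d ∈ (univ.erase b).erase c,
        ∑ e ∈ ((univ.erase b).erase c).erase d, F b c d e := by
  have h1 : ∀ b c d, ∑ e ∈ ((univ.erase b).erase c).erase d, F (π b) (π c) (π d) (π e)
      = ∑ e ∈ (((univ.erase (π b)).erase (π c)).erase (π d)), F (π b) (π c) (π d) e := by
    intro b c d
    rw [← univ_erase_image π b, ← erase_image, ← erase_image,
      Finset.sum_image (fun x _ y _ h => π.injective h)]
  simp_rw [h1]
  exact reindex3 π (fun b c d => ∑ e ∈ ((univ.erase b).erase c).erase d, F b c d e)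

lemma key1 (f : Fin n → ℝ) (i : Fin n) :
    ∑ π : Perm (Fin n), f (π i) = (n-1).factorial * ∑ b, f b := by
  have hn : 1 ≤ n := Nat.pos_of_ne_zero (fun h => (h ▸ i).elim0)
  have inv : ∀ b : Fin n, ∑ π : Perm (Fin n), f (π b) = ∑ π : Perm (Fin n), f (π i) := by
    intro b
    set σ := Equiv.swap i b with hσ
    calc ∑ π : Perm (Fin n), f (π b)
        = ∑ π : Perm (Fin n), f ((π * σ) i) := by
          simp [Perm.mul_apply, σ, Equiv.swap_apply_left]
      _ = ∑ π : Perm (Fin n), f (π i) :=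
          Equiv.sum_comp (Equiv.mulRight σ) (fun π => f (π i))
  have big : ∑ b : Fin n, ∑ π : Perm (Fin n), f (π b)
      = (n : ℝ) * ∑ π : Perm (Fin n), f (π i) := by
    rw [Finset.sum_congr rfl (fun b _ => inv b), Finset.sum_const, Finset.card_univ,
      Fintype.card_fin, nsmul_eq_mul]
  have big2 : ∑ b : Fin n, ∑ π : Perm (Fin n), f (π b)
      = (n.factorial : ℝ) * ∑ b, f b := by
    rw [Finset.sum_comm]
    have : ∀ π : Perm (Fin n), ∑ b, f (π b) = ∑ b, f b :=
      fun π => Equiv.sum_comp π f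
    rw [Finset.sum_congr rfl (fun π _ => this π), Finset.sum_const, Finset.card_univ,
      Fintype.card_perm, Fintype.card_fin, nsmul_eq_mul]
  have hfact : (n.factorial : ℝ) = (n : ℝ) * (n-1).factorial := by
    rw [← Nat.mul_factorial_pred (by omega : n ≠ 0)]
    push_cast
    ring
  have hne : (n : ℝ) ≠ 0 := Nat.cast_ne_zero.2 (by omega)
  apply mul_left_cancel₀ hne
  rw [← big, big2, hfact]
  ring

lemma key2 (f g : Fin n → ℝ) {i j : Fin n} (hij : i ≠ j) :
    ∑ π : Perm (Fin n), f (π i) * g (π j)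
      = (n-2).factorial * ∑ b, ∑ c ∈ univ.erase b, f b * g c := by
  have hn : 2 ≤ n := by
    have : 1 < Fintype.card (Fin n) := Fintype.one_lt_card_iff_nontrivial.2 ⟨⟨i, j, hij⟩⟩
    simpa [Nat.succ_le_iff] using this
  have inv : ∀ b c : Fin n, b ≠ c →
      ∑ π : Perm (Fin n), f (π b) * g (π c) = ∑ π : Perm (Fin n), f (π i) * g (π j) := by
    intro b c hbc
    obtain ⟨σ, hσ⟩ := exists_perm_map ![i, j] ![b, c] (inj2 hij) (inj2 hbc)
    have h0 : σ i = b := by simpa using hσ 0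
    have h1 : σ j = c := by simpa using hσ 1
    calc ∑ π : Perm (Fin n), f (π b) * g (π c)
        = ∑ π : Perm (Fin n), f ((π * σ) i) * g ((π * σ) j) := by
          simp [Perm.mul_apply, h0, h1]
      _ = ∑ π : Perm (Fin n), f (π i) * g (π j) :=
          Equiv.sum_comp (Equiv.mulRight σ) (fun π => f (π i) * g (π j))
  have big : ∑ b : Fin n, ∑ c ∈ univ.erase b, ∑ π : Perm (Fin n), f (π b) * g (π c)
      = ((n : ℝ) * ((n:ℝ) - 1)) * ∑ π : Perm (Fin n), f (π i) * g (π j) := by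
    have h1 : ∀ b : Fin n, ∑ c ∈ univ.erase b, ∑ π : Perm (Fin n), f (π b) * g (π c)
        = ((n:ℝ) - 1) * ∑ π : Perm (Fin n), f (π i) * g (π j) := by
      intro b
      rw [Finset.sum_congr rfl (fun c hc => inv b c (Finset.ne_of_mem_erase hc).symm),
        Finset.sum_const, Finset.card_erase_of_mem (Finset.mem_univ b), Finset.card_univ,
        Fintype.card_fin, nsmul_eq_mul]
      congr 1
      have : (1:ℕ) ≤ n := by omega
      push_cast [Nat.cast_sub this]
      ring
    rw [Finset.sum_congr rfl (fun b _ => h1 b), Finset.sum_const, Finset.card_univ,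
      Fintype.card_fin, nsmul_eq_mul]
    ring
  have big2 : ∑ b : Fin n, ∑ c ∈ univ.erase b, ∑ π : Perm (Fin n), f (π b) * g (π c)
      = (n.factorial : ℝ) * ∑ b, ∑ c ∈ univ.erase b, f b * g c := by
    calc ∑ b : Fin n, ∑ c ∈ univ.erase b, ∑ π : Perm (Fin n), f (π b) * g (π c)
        = ∑ b : Fin n, ∑ π : Perm (Fin n), ∑ c ∈ univ.erase b, f (π b) * g (π c) := by
          exact Finset.sum_congr rfl (fun b _ => Finset.sum_comm)
      _ = ∑ π : Perm (Fin n), ∑ b : Fin n, ∑ c ∈ univ.erase b, f (π b) * g (π c) :=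
          Finset.sum_comm
      _ = ∑ π : Perm (Fin n), ∑ b : Fin n, ∑ c ∈ univ.erase b, f b * g c :=
          Finset.sum_congr rfl (fun π _ => reindex2 π (fun b c => f b * g c))
      _ = (n.factorial : ℝ) * ∑ b, ∑ c ∈ univ.erase b, f b * g c := by
          rw [Finset.sum_const, Finset.card_univ, Fintype.card_perm, Fintype.card_fin,
            nsmul_eq_mul]
  have hfact : (n.factorial : ℝ) = ((n : ℝ) * ((n:ℝ) - 1)) * (n-2).factorial := by
    obtain ⟨m, rfl⟩ := Nat.exists_eq_add_of_le hn
    have h1 : 2 + m - 1 = m + 1 := by omega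
    have h2 : 2 + m - 2 = m := by omega
    have h3 : 2 + m = (m + 1) + 1 := by omega
    rw [h2, h3, Nat.factorial_succ, Nat.factorial_succ]
    push_cast
    ring
  have hne : ((n : ℝ) * ((n:ℝ) - 1)) ≠ 0 := by
    have h1 : (n:ℝ) ≠ 0 := Nat.cast_ne_zero.2 (by omega)
    have h2 : (n:ℝ) - 1 ≠ 0 := by
      have : (1:ℝ) < (n:ℝ) := by exact_mod_cast hn
      intro h; nlinarith
    exact mul_ne_zero h1 h2
  apply mul_left_cancel₀ hne
  rw [← big, big2, hfact]
  ring

lemma key3 (f g h : Fin n → ℝ) {i j k : Fin n} (hij : i ≠ j) (hik : i ≠ k) (hjk : j ≠ k) :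
    ∑ π : Perm (Fin n), f (π i) * g (π j) * h (π k)
      = (n-3).factorial *
        ∑ b, ∑ c ∈ univ.erase b, ∑ d ∈ (univ.erase b).erase c, f b * g c * h d := by
  have hn : 3 ≤ n := by
    have hsub : ({i, j, k} : Finset (Fin n)) ⊆ univ := Finset.subset_univ _
    have hcard : ({i, j, k} : Finset (Fin n)).card = 3 := by
      rw [Finset.card_insert_of_notMem (by simp [hij, hik]),
        Finset.card_insert_of_notMem (by simp [hjk]), Finset.card_singleton]
    calc 3 = ({i, j, k} : Finset (Fin n)).card := hcard.symm
      _ ≤ (univ : Finset (Fin n)).card := Finset.card_le_card hsub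
      _ = n := by simp
  have inv : ∀ b c d : Fin n, b ≠ c → b ≠ d → c ≠ d →
      ∑ π : Perm (Fin n), f (π b) * g (π c) * h (π d)
        = ∑ π : Perm (Fin n), f (π i) * g (π j) * h (π k) := by
    intro b c d hbc hbd hcd
    obtain ⟨σ, hσ⟩ := exists_perm_map ![i, j, k] ![b, c, d] (inj3 hij hik hjk)
      (inj3 hbc hbd hcd)
    have h0 : σ i = b := by simpa using hσ 0
    have h1 : σ j = c := by simpa using hσ 1
    have h2 : σ k = d := by simpa using hσ 2
    calc ∑ π : Perm (Fin n), f (π b) * g (π c) * h (π d)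
        = ∑ π : Perm (Fin n), f ((π * σ) i) * g ((π * σ) j) * h ((π * σ) k) := by
          simp [Perm.mul_apply, h0, h1, h2]
      _ = ∑ π : Perm (Fin n), f (π i) * g (π j) * h (π k) :=
          Equiv.sum_comp (Equiv.mulRight σ) (fun π => f (π i) * g (π j) * h (π k))
  set L := ∑ π : Perm (Fin n), f (π i) * g (π j) * h (π k) with hL
  have big : ∑ b : Fin n, ∑ c ∈ univ.erase b, ∑ d ∈ (univ.erase b).erase c,
      (∑ π : Perm (Fin n), f (π b) * g (π c) * h (π d))
      = ((n : ℝ) * ((n:ℝ) - 1) * ((n:ℝ) - 2)) * L := by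
    have h1 : ∀ b : Fin n, ∀ c ∈ univ.erase b, ∑ d ∈ (univ.erase b).erase c,
        (∑ π : Perm (Fin n), f (π b) * g (π c) * h (π d)) = ((n:ℝ) - 2) * L := by
      intro b c hc
      have hcb : c ≠ b := Finset.ne_of_mem_erase hc
      rw [Finset.sum_congr rfl (fun d hd => by
        have hdc : d ≠ c := Finset.ne_of_mem_erase hd
        have hdb : d ≠ b := Finset.ne_of_mem_erase (Finset.mem_of_mem_erase hd)
        exact inv b c d hcb.symm hdb.symm hdc.symm),
        Finset.sum_const, Finset.card_erase_of_mem hc,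
        Finset.card_erase_of_mem (Finset.mem_univ b), Finset.card_univ, Fintype.card_fin,
        nsmul_eq_mul]
      congr 1
      push_cast [Nat.cast_sub (show 1 ≤ n - 1 by omega), Nat.cast_sub (show 1 ≤ n by omega)]
      ring
    have h2 : ∀ b : Fin n, ∑ c ∈ univ.erase b, ∑ d ∈ (univ.erase b).erase c,
        (∑ π : Perm (Fin n), f (π b) * g (π c) * h (π d))
          = ((n:ℝ) - 1) * (((n:ℝ) - 2) * L) := by
      intro b
      rw [Finset.sum_congr rfl (h1 b), Finset.sum_const,
        Finset.card_erase_of_mem (Finset.mem_univ b), Finset.card_univ, Fintype.card_fin,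
        nsmul_eq_mul]
      congr 1
      push_cast [Nat.cast_sub (show 1 ≤ n by omega)]
      ring
    rw [Finset.sum_congr rfl (fun b _ => h2 b), Finset.sum_const, Finset.card_univ,
      Fintype.card_fin, nsmul_eq_mul]
    ring
  have big2 : ∑ b : Fin n, ∑ c ∈ univ.erase b, ∑ d ∈ (univ.erase b).erase c,
      (∑ π : Perm (Fin n), f (π b) * g (π c) * h (π d))
      = (n.factorial : ℝ) *
        ∑ b, ∑ c ∈ univ.erase b, ∑ d ∈ (univ.erase b).erase c, f b * g c * h d := by
    calc ∑ b : Fin n, ∑ c ∈ univ.erase b, ∑ d ∈ (univ.erase b).erase c,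
        (∑ π : Perm (Fin n), f (π b) * g (π c) * h (π d))
        = ∑ π : Perm (Fin n), ∑ b : Fin n, ∑ c ∈ univ.erase b,
            ∑ d ∈ (univ.erase b).erase c, f (π b) * g (π c) * h (π d) := by
          rw [Finset.sum_congr rfl (fun b _ => Finset.sum_congr rfl
            (fun c _ => Finset.sum_comm)),
            Finset.sum_congr rfl (fun b (_ : b ∈ univ) => Finset.sum_comm)]
          exact Finset.sum_comm
      _ = ∑ π : Perm (Fin n), ∑ b : Fin n, ∑ c ∈ univ.erase b,
            ∑ d ∈ (univ.erase b).erase c, f b * g c * h d :=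
          Finset.sum_congr rfl (fun π _ => reindex3 π (fun b c d => f b * g c * h d))
      _ = _ := by
          rw [Finset.sum_const, Finset.card_univ, Fintype.card_perm, Fintype.card_fin,
            nsmul_eq_mul]
  have hfact : (n.factorial : ℝ) = ((n : ℝ) * ((n:ℝ) - 1) * ((n:ℝ) - 2)) * (n-3).factorial := by
    obtain ⟨m, rfl⟩ := Nat.exists_eq_add_of_le hn
    have h2 : 3 + m - 3 = m := by omega
    have h3 : 3 + m = ((m + 1) + 1) + 1 := by omega
    rw [h2, h3, Nat.factorial_succ, Nat.factorial_succ, Nat.factorial_succ]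
    push_cast
    ring
  have hne : ((n : ℝ) * ((n:ℝ) - 1) * ((n:ℝ) - 2)) ≠ 0 := by
    have h0 : (3:ℝ) ≤ (n:ℝ) := by exact_mod_cast hn
    have h1 : (n:ℝ) ≠ 0 := by nlinarith
    have h2 : (n:ℝ) - 1 ≠ 0 := by nlinarith
    have h3 : (n:ℝ) - 2 ≠ 0 := by nlinarith
    exact mul_ne_zero (mul_ne_zero h1 h2) h3
  apply mul_left_cancel₀ hne
  rw [← big, big2, hfact]
  ring

lemma key4 (f g h p : Fin n → ℝ) {i j k l : Fin n} (hij : i ≠ j) (hik : i ≠ k)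
    (hil : i ≠ l) (hjk : j ≠ k) (hjl : j ≠ l) (hkl : k ≠ l) :
    ∑ π : Perm (Fin n), f (π i) * g (π j) * h (π k) * p (π l)
      = (n-4).factorial *
        ∑ b, ∑ c ∈ univ.erase b, ∑ d ∈ (univ.erase b).erase c,
          ∑ e ∈ ((univ.erase b).erase c).erase d, f b * g c * h d * p e := by
  have hn : 4 ≤ n := by
    have hsub : ({i, j, k, l} : Finset (Fin n)) ⊆ univ := Finset.subset_univ _
    have hcard : ({i, j, k, l} : Finset (Fin n)).card = 4 := by
      rw [Finset.card_insert_of_notMem (by simp [hij, hik, hil]),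
        Finset.card_insert_of_notMem (by simp [hjk, hjl]),
        Finset.card_insert_of_notMem (by simp [hkl]), Finset.card_singleton]
    calc 4 = ({i, j, k, l} : Finset (Fin n)).card := hcard.symm
      _ ≤ (univ : Finset (Fin n)).card := Finset.card_le_card hsub
      _ = n := by simp
  have inv : ∀ b c d e : Fin n, b ≠ c → b ≠ d → b ≠ e → c ≠ d → c ≠ e → d ≠ e →
      ∑ π : Perm (Fin n), f (π b) * g (π c) * h (π d) * p (π e)
        = ∑ π : Perm (Fin n), f (π i) * g (π j) * h (π k) * p (π l) := by
    intro b c d e hbc hbd hbe hcd hce hde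
    obtain ⟨σ, hσ⟩ := exists_perm_map ![i, j, k, l] ![b, c, d, e]
      (inj4 hij hik hil hjk hjl hkl) (inj4 hbc hbd hbe hcd hce hde)
    have h0 : σ i = b := by simpa using hσ 0
    have h1 : σ j = c := by simpa using hσ 1
    have h2 : σ k = d := by simpa using hσ 2
    have h3 : σ l = e := by simpa using hσ 3
    calc ∑ π : Perm (Fin n), f (π b) * g (π c) * h (π d) * p (π e)
        = ∑ π : Perm (Fin n), f ((π * σ) i) * g ((π * σ) j) * h ((π * σ) k) * p ((π * σ) l) := by
          simp [Perm.mul_apply, h0, h1, h2, h3]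
      _ = ∑ π : Perm (Fin n), f (π i) * g (π j) * h (π k) * p (π l) :=
          Equiv.sum_comp (Equiv.mulRight σ) (fun π => f (π i) * g (π j) * h (π k) * p (π l))
  set L := ∑ π : Perm (Fin n), f (π i) * g (π j) * h (π k) * p (π l) with hL
  have big : ∑ b : Fin n, ∑ c ∈ univ.erase b, ∑ d ∈ (univ.erase b).erase c,
      ∑ e ∈ ((univ.erase b).erase c).erase d,
      (∑ π : Perm (Fin n), f (π b) * g (π c) * h (π d) * p (π e))
      = ((n : ℝ) * ((n:ℝ) - 1) * ((n:ℝ) - 2) * ((n:ℝ) - 3)) * L := by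
    have h1 : ∀ b : Fin n, ∀ c ∈ univ.erase b, ∀ d ∈ (univ.erase b).erase c,
        ∑ e ∈ ((univ.erase b).erase c).erase d,
          (∑ π : Perm (Fin n), f (π b) * g (π c) * h (π d) * p (π e))
          = ((n:ℝ) - 3) * L := by
      intro b c hc d hd
      have hcb : c ≠ b := Finset.ne_of_mem_erase hc
      have hdc : d ≠ c := Finset.ne_of_mem_erase hd
      have hdb : d ≠ b := Finset.ne_of_mem_erase (Finset.mem_of_mem_erase hd)
      rw [Finset.sum_congr rfl (fun e he => by
        have hed : e ≠ d := Finset.ne_of_mem_erase he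
        have hec : e ≠ c := Finset.ne_of_mem_erase (Finset.mem_of_mem_erase he)
        have heb : e ≠ b :=
          Finset.ne_of_mem_erase (Finset.mem_of_mem_erase (Finset.mem_of_mem_erase he))
        exact inv b c d e hcb.symm hdb.symm heb.symm hdc.symm hec.symm hed.symm),
        Finset.sum_const, Finset.card_erase_of_mem hd, Finset.card_erase_of_mem hc,
        Finset.card_erase_of_mem (Finset.mem_univ b), Finset.card_univ, Fintype.card_fin,
        nsmul_eq_mul]
      congr 1
      push_cast [Nat.cast_sub (show 1 ≤ n - 1 - 1 by omega),
        Nat.cast_sub (show 1 ≤ n - 1 by omega), Nat.cast_sub (show 1 ≤ n by omega)]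
      ring
    have h2 : ∀ b : Fin n, ∀ c ∈ univ.erase b, ∑ d ∈ (univ.erase b).erase c,
        ∑ e ∈ ((univ.erase b).erase c).erase d,
          (∑ π : Perm (Fin n), f (π b) * g (π c) * h (π d) * p (π e))
          = ((n:ℝ) - 2) * (((n:ℝ) - 3) * L) := by
      intro b c hc
      rw [Finset.sum_congr rfl (h1 b c hc), Finset.sum_const, Finset.card_erase_of_mem hc,
        Finset.card_erase_of_mem (Finset.mem_univ b), Finset.card_univ, Fintype.card_fin,
        nsmul_eq_mul]
      congr 1
      push_cast [Nat.cast_sub (show 1 ≤ n - 1 by omega), Nat.cast_sub (show 1 ≤ n by omega)]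
      ring
    have h3 : ∀ b : Fin n, ∑ c ∈ univ.erase b, ∑ d ∈ (univ.erase b).erase c,
        ∑ e ∈ ((univ.erase b).erase c).erase d,
          (∑ π : Perm (Fin n), f (π b) * g (π c) * h (π d) * p (π e))
          = ((n:ℝ) - 1) * (((n:ℝ) - 2) * (((n:ℝ) - 3) * L)) := by
      intro b
      rw [Finset.sum_congr rfl (h2 b), Finset.sum_const,
        Finset.card_erase_of_mem (Finset.mem_univ b), Finset.card_univ, Fintype.card_fin,
        nsmul_eq_mul]
      congr 1
      push_cast [Nat.cast_sub (show 1 ≤ n by omega)]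
      ring
    rw [Finset.sum_congr rfl (fun b _ => h3 b), Finset.sum_const, Finset.card_univ,
      Fintype.card_fin, nsmul_eq_mul]
    ring
  have big2 : ∑ b : Fin n, ∑ c ∈ univ.erase b, ∑ d ∈ (univ.erase b).erase c,
      ∑ e ∈ ((univ.erase b).erase c).erase d,
      (∑ π : Perm (Fin n), f (π b) * g (π c) * h (π d) * p (π e))
      = (n.factorial : ℝ) *
        ∑ b, ∑ c ∈ univ.erase b, ∑ d ∈ (univ.erase b).erase c,
          ∑ e ∈ ((univ.erase b).erase c).erase d, f b * g c * h d * p e := by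
    calc ∑ b : Fin n, ∑ c ∈ univ.erase b, ∑ d ∈ (univ.erase b).erase c,
        ∑ e ∈ ((univ.erase b).erase c).erase d,
        (∑ π : Perm (Fin n), f (π b) * g (π c) * h (π d) * p (π e))
        = ∑ π : Perm (Fin n), ∑ b : Fin n, ∑ c ∈ univ.erase b,
            ∑ d ∈ (univ.erase b).erase c, ∑ e ∈ ((univ.erase b).erase c).erase d,
            f (π b) * g (π c) * h (π d) * p (π e) := by
          rw [Finset.sum_congr rfl (fun b _ => Finset.sum_congr rfl
            (fun c _ => Finset.sum_congr rfl (fun d _ => Finset.sum_comm)))]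
          rw [Finset.sum_congr rfl (fun b _ => Finset.sum_congr rfl
            (fun c (_ : c ∈ univ.erase b) => Finset.sum_comm))]
          rw [Finset.sum_congr rfl (fun b (_ : b ∈ univ) => Finset.sum_comm)]
          exact Finset.sum_comm
      _ = ∑ π : Perm (Fin n), ∑ b : Fin n, ∑ c ∈ univ.erase b,
            ∑ d ∈ (univ.erase b).erase c, ∑ e ∈ ((univ.erase b).erase c).erase d,
            f b * g c * h d * p e :=
          Finset.sum_congr rfl (fun π _ => reindex4 π (fun b c d e => f b * g c * h d * p e))
      _ = _ := by
          rw [Finset.sum_const, Finset.card_univ, Fintype.card_perm, Fintype.card_fin,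
            nsmul_eq_mul]
  have hfact : (n.factorial : ℝ)
      = ((n : ℝ) * ((n:ℝ) - 1) * ((n:ℝ) - 2) * ((n:ℝ) - 3)) * (n-4).factorial := by
    obtain ⟨m, rfl⟩ := Nat.exists_eq_add_of_le hn
    have h2 : 4 + m - 4 = m := by omega
    have h3 : 4 + m = (((m + 1) + 1) + 1) + 1 := by omega
    rw [h2, h3, Nat.factorial_succ, Nat.factorial_succ, Nat.factorial_succ,
      Nat.factorial_succ]
    push_cast
    ring
  have hne : ((n : ℝ) * ((n:ℝ) - 1) * ((n:ℝ) - 2) * ((n:ℝ) - 3)) ≠ 0 := by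
    have h0 : (4:ℝ) ≤ (n:ℝ) := by exact_mod_cast hn
    have h1 : (n:ℝ) ≠ 0 := by nlinarith
    have h2 : (n:ℝ) - 1 ≠ 0 := by nlinarith
    have h3 : (n:ℝ) - 2 ≠ 0 := by nlinarith
    have h4 : (n:ℝ) - 3 ≠ 0 := by nlinarith
    exact mul_ne_zero (mul_ne_zero (mul_ne_zero h1 h2) h3) h4
  apply mul_left_cancel₀ hne
  rw [← big, big2, hfact]
  ring

lemma R2eval (f g : Fin n → ℝ) :
    ∑ b, ∑ c ∈ univ.erase b, f b * g c
      = (∑ b, f b) * (∑ b, g b) - ∑ b, f b * g b := by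
  have h1 : ∀ b : Fin n, ∑ c ∈ univ.erase b, f b * g c = f b * ((∑ c, g c) - g b) := by
    intro b
    rw [← Finset.mul_sum, Finset.sum_erase_eq_sub (Finset.mem_univ b)]
  rw [Finset.sum_congr rfl (fun b _ => h1 b)]
  simp only [mul_sub, Finset.sum_sub_distrib, ← Finset.sum_mul]

lemma R3eval (f g h : Fin n → ℝ) :
    ∑ b, ∑ c ∈ univ.erase b, ∑ d ∈ (univ.erase b).erase c, f b * g c * h d
      = (∑ b, f b) * (∑ b, g b) * (∑ b, h b)
        - (∑ b, f b * g b) * (∑ b, h b)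
        - (∑ b, f b * h b) * (∑ b, g b)
        - (∑ b, g b * h b) * (∑ b, f b)
        + 2 * ∑ b, f b * g b * h b := by
  have h1 : ∀ b : Fin n, ∀ c ∈ univ.erase b,
      ∑ d ∈ (univ.erase b).erase c, f b * g c * h d
        = ((∑ d, h d) * (f b * g c) - h b * (f b * g c)) - f b * (g c * h c) := by
    intro b c hc
    rw [← Finset.mul_sum, Finset.sum_erase_eq_sub hc,
      Finset.sum_erase_eq_sub (Finset.mem_univ b)]
    ring
  rw [Finset.sum_congr rfl (fun b _ => Finset.sum_congr rfl (h1 b))]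
  have h2 : ∀ b : Fin n, ∑ c ∈ univ.erase b,
      (((∑ d, h d) * (f b * g c) - h b * (f b * g c)) - f b * (g c * h c))
      = (((∑ d, h d) * (f b * ((∑ c, g c) - g b)) - h b * (f b * ((∑ c, g c) - g b)))
          - f b * ((∑ c, g c * h c) - g b * h b)) := by
    intro b
    simp only [Finset.sum_sub_distrib, ← Finset.mul_sum,
      Finset.sum_erase_eq_sub (Finset.mem_univ b)]
    ring
  rw [Finset.sum_congr rfl (fun b _ => h2 b)]
  have h3 : ∀ b : Fin n,
      (((∑ d, h d) * (f b * ((∑ c, g c) - g b)) - h b * (f b * ((∑ c, g c) - g b)))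
          - f b * ((∑ c, g c * h c) - g b * h b))
      = (((∑ d, h d) * (∑ c, g c)) * f b - (∑ d, h d) * (f b * g b)
          - (∑ c, g c) * (f b * h b) - (∑ c, g c * h c) * f b)
          + 2 * (f b * g b * h b) := by
    intro b
    ring
  rw [Finset.sum_congr rfl (fun b _ => h3 b)]
  simp only [Finset.sum_add_distrib, Finset.sum_sub_distrib, ← Finset.mul_sum]
  ring

lemma R4eval (f g h p : Fin n → ℝ) :
    ∑ b, ∑ c ∈ univ.erase b, ∑ d ∈ (univ.erase b).erase c,
        ∑ e ∈ ((univ.erase b).erase c).erase d, f b * g c * h d * p e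
      = (∑ b, p b) *
          (∑ b, ∑ c ∈ univ.erase b, ∑ d ∈ (univ.erase b).erase c, f b * g c * h d)
        - (∑ b, ∑ c ∈ univ.erase b, ∑ d ∈ (univ.erase b).erase c,
            (fun x => f x * p x) b * g c * h d)
        - (∑ b, ∑ c ∈ univ.erase b, ∑ d ∈ (univ.erase b).erase c,
            f b * (fun x => g x * p x) c * h d)
        - (∑ b, ∑ c ∈ univ.erase b, ∑ d ∈ (univ.erase b).erase c,
            f b * g c * (fun x => h x * p x) d) := by
  have h1 : ∀ b : Fin n, ∀ c ∈ univ.erase b, ∀ d ∈ (univ.erase b).erase c,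
      ∑ e ∈ ((univ.erase b).erase c).erase d, f b * g c * h d * p e
        = ((∑ e, p e) * (f b * g c * h d) - (f b * p b) * g c * h d)
            - f b * (g c * p c) * h d - f b * g c * (h d * p d) := by
    intro b c hc d hd
    rw [← Finset.mul_sum, Finset.sum_erase_eq_sub hd, Finset.sum_erase_eq_sub hc,
      Finset.sum_erase_eq_sub (Finset.mem_univ b)]
    ring
  rw [Finset.sum_congr rfl (fun b _ => Finset.sum_congr rfl (fun c hc =>
    Finset.sum_congr rfl (h1 b c hc)))]
  simp only [Finset.sum_sub_distrib, ← Finset.mul_sum]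

lemma split4 (g : Fin n → Fin n → Fin n → Fin n → ℝ) :
    ∑ b, ∑ c, ∑ d, ∑ e, g b c d e
      = (∑ b, g b b b b)
        + (∑ b, ∑ c ∈ univ.erase b,
            (g b b b c + g b b c b + g b c b b + g b c c c + g b b c c + g b c b c + g b c c b))
        + (∑ b, ∑ c ∈ univ.erase b, ∑ d ∈ (univ.erase b).erase c,
            (g b b c d + g b c b d + g b c d b + g b c c d + g b c d c + g b c d d))
        + (∑ b, ∑ c ∈ univ.erase b, ∑ d ∈ (univ.erase b).erase c,
            ∑ e ∈ ((univ.erase b).erase c).erase d, g b c d e) := by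
  have hA : ∀ (F : Fin n → ℝ) (b : Fin n), (∑ x, F x) = F b + ∑ x ∈ univ.erase b, F x :=
    fun F b => (Finset.add_sum_erase _ F (Finset.mem_univ b)).symm
  have hB : ∀ (F : Fin n → ℝ) {b c : Fin n}, c ∈ univ.erase b →
      (∑ x, F x) = F b + (F c + ∑ x ∈ (univ.erase b).erase c, F x) := by
    intro F b c hc
    rw [hA F b, Finset.add_sum_erase _ F hc]
  have hC : ∀ (F : Fin n → ℝ) {b c d : Fin n}, c ∈ univ.erase b →
      d ∈ (univ.erase b).erase c →
      (∑ x, F x) = F b + (F c + (F d + ∑ x ∈ ((univ.erase b).erase c).erase d, F x)) := by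
    intro F b c d hc hd
    rw [hB F hc, Finset.add_sum_erase _ F hd]
  have e1 : ∀ b : Fin n, (∑ d, ∑ e, g b b d e)
      = g b b b b + (∑ e ∈ univ.erase b, g b b b e)
        + ∑ d ∈ univ.erase b, (g b b d b + g b b d d + ∑ e ∈ (univ.erase b).erase d, g b b d e) := by
    intro b
    rw [hA (fun d => ∑ e, g b b d e) b, hA (fun e => g b b b e) b,
      show ∑ d ∈ univ.erase b, (∑ e, g b b d e)
          = ∑ d ∈ univ.erase b, (g b b d b + (g b b d d + ∑ e ∈ (univ.erase b).erase d, g b b d e))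
        from Finset.sum_congr rfl (fun d hd => hB (fun e => g b b d e) hd)]
    have : ∀ d ∈ univ.erase b, (g b b d b + (g b b d d + ∑ e ∈ (univ.erase b).erase d, g b b d e))
        = g b b d b + g b b d d + ∑ e ∈ (univ.erase b).erase d, g b b d e := by
      intro d _; ring
    rw [Finset.sum_congr rfl this]
  have e2 : ∀ b : Fin n, ∀ c ∈ univ.erase b, (∑ d, ∑ e, g b c d e)
      = (g b c b b + g b c b c + ∑ e ∈ (univ.erase b).erase c, g b c b e)
        + (g b c c b + g b c c c + ∑ e ∈ (univ.erase b).erase c, g b c c e)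
        + ∑ d ∈ (univ.erase b).erase c,
            (g b c d b + g b c d c + g b c d d
              + ∑ e ∈ ((univ.erase b).erase c).erase d, g b c d e) := by
    intro b c hc
    rw [hB (fun d => ∑ e, g b c d e) hc, hB (fun e => g b c b e) hc, hB (fun e => g b c c e) hc,
      show ∑ d ∈ (univ.erase b).erase c, (∑ e, g b c d e)
          = ∑ d ∈ (univ.erase b).erase c,
              (g b c d b + (g b c d c + (g b c d d
                + ∑ e ∈ ((univ.erase b).erase c).erase d, g b c d e)))
        from Finset.sum_congr rfl (fun d hd => hC (fun e => g b c d e) hc hd)]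
    have : ∀ d ∈ (univ.erase b).erase c,
        (g b c d b + (g b c d c + (g b c d d
            + ∑ e ∈ ((univ.erase b).erase c).erase d, g b c d e)))
        = g b c d b + g b c d c + g b c d d
            + ∑ e ∈ ((univ.erase b).erase c).erase d, g b c d e := by
      intro d _; ring
    rw [Finset.sum_congr rfl this]
    ring
  have e3 : ∀ b : Fin n, (∑ c, ∑ d, ∑ e, g b c d e)
      = (g b b b b + (∑ e ∈ univ.erase b, g b b b e)
          + ∑ d ∈ univ.erase b,
              (g b b d b + g b b d d + ∑ e ∈ (univ.erase b).erase d, g b b d e))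
        + ∑ c ∈ univ.erase b,
            ((g b c b b + g b c b c + ∑ e ∈ (univ.erase b).erase c, g b c b e)
              + (g b c c b + g b c c c + ∑ e ∈ (univ.erase b).erase c, g b c c e)
              + ∑ d ∈ (univ.erase b).erase c,
                  (g b c d b + g b c d c + g b c d d
                    + ∑ e ∈ ((univ.erase b).erase c).erase d, g b c d e)) := by
    intro b
    rw [hA (fun c => ∑ d, ∑ e, g b c d e) b, e1 b, Finset.sum_congr rfl (e2 b)]
  rw [Finset.sum_congr rfl (fun b _ => e3 b)]
  simp only [Finset.sum_add_distrib]
  ring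

lemma pow4_sum (x : Fin n → ℝ) :
    (∑ i, x i)^4 = ∑ i, ∑ j, ∑ k, ∑ l, x i * x j * x k * x l := by
  calc (∑ i, x i)^4
      = ((∑ i, x i) * (∑ j, x j)) * ((∑ k, x k) * (∑ l, x l)) := by ring
    _ = (∑ i, ∑ j, x i * x j) * (∑ k, ∑ l, x k * x l) := by
        rw [Finset.sum_mul_sum, Finset.sum_mul_sum]
    _ = ∑ i, ∑ k, (∑ j, x i * x j) * (∑ l, x k * x l) := Finset.sum_mul_sum _ _ _ _
    _ = ∑ i, ∑ k, ∑ j, ∑ l, (x i * x j) * (x k * x l) := by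
        refine Finset.sum_congr rfl fun i _ => Finset.sum_congr rfl fun k _ => ?_
        rw [Finset.sum_mul_sum]
    _ = ∑ i, ∑ j, ∑ k, ∑ l, x i * x j * x k * x l := by
        refine Finset.sum_congr rfl fun i _ => ?_
        rw [Finset.sum_comm]
        exact Finset.sum_congr rfl fun j _ => Finset.sum_congr rfl fun k _ =>
          Finset.sum_congr rfl fun l _ => by ring

lemma expand_sum (a : Fin n → ℝ) :
    ∑ π : Perm (Fin n), (∑ i, a i * a (π i))^4
      = ∑ i, ∑ j, ∑ k, ∑ l, (a i * a j * a k * a l) *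
          ∑ π : Perm (Fin n), a (π i) * a (π j) * a (π k) * a (π l) := by
  rw [Finset.sum_congr rfl (fun (π : Perm (Fin n)) _ => pow4_sum (fun i => a i * a (π i)))]
  rw [Finset.sum_comm]
  refine Finset.sum_congr rfl fun i _ => ?_
  rw [Finset.sum_comm]
  refine Finset.sum_congr rfl fun j _ => ?_
  rw [Finset.sum_comm]
  refine Finset.sum_congr rfl fun k _ => ?_
  rw [Finset.sum_comm]
  refine Finset.sum_congr rfl fun l _ => ?_
  rw [Finset.mul_sum]
  exact Finset.sum_congr rfl fun π _ => by ring

lemma leaf1 (f : Fin n → ℝ) :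
    ∑ b, f b * (∑ π : Perm (Fin n), f (π b)) = (n-1).factorial * (∑ b, f b)^2 := by
  rw [Finset.sum_congr rfl (fun b _ => by rw [key1 f b])]
  rw [← Finset.sum_mul]
  ring

lemma leaf2 (f g : Fin n → ℝ) :
    ∑ b, ∑ c ∈ univ.erase b, (f b * g c) * (∑ π : Perm (Fin n), f (π b) * g (π c))
      = (n-2).factorial * (∑ b, ∑ c ∈ univ.erase b, f b * g c)^2 := by
  rw [Finset.sum_congr rfl (fun b _ => Finset.sum_congr rfl (fun c hc => by
    rw [key2 f g (Finset.ne_of_mem_erase hc).symm]))]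
  rw [show (fun (b : Fin n) => ∑ c ∈ univ.erase b, (f b * g c) *
      ((n-2).factorial * ∑ b', ∑ c' ∈ univ.erase b', f b' * g c'))
    = (fun b => ∑ c ∈ univ.erase b, ((n-2).factorial * ∑ b', ∑ c' ∈ univ.erase b', f b' * g c') * (f b * g c)) from by
      funext b; exact Finset.sum_congr rfl (fun c _ => by ring)]
  simp only [← Finset.mul_sum]
  ring

lemma leaf3 (f g h : Fin n → ℝ) :
    ∑ b, ∑ c ∈ univ.erase b, ∑ d ∈ (univ.erase b).erase c,
        (f b * g c * h d) * (∑ π : Perm (Fin n), f (π b) * g (π c) * h (π d))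
      = (n-3).factorial *
        (∑ b, ∑ c ∈ univ.erase b, ∑ d ∈ (univ.erase b).erase c, f b * g c * h d)^2 := by
  rw [Finset.sum_congr rfl (fun b _ => Finset.sum_congr rfl (fun c hc =>
    Finset.sum_congr rfl (fun d hd => by
      have hbc : b ≠ c := (Finset.ne_of_mem_erase hc).symm
      have hbd : b ≠ d := (Finset.ne_of_mem_erase (Finset.mem_of_mem_erase hd)).symm
      have hcd : c ≠ d := (Finset.ne_of_mem_erase hd).symm
      rw [key3 f g h hbc hbd hcd])))]
  rw [show (fun (b : Fin n) => ∑ c ∈ univ.erase b, ∑ d ∈ (univ.erase b).erase c,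
      (f b * g c * h d) * ((n-3).factorial *
        ∑ b', ∑ c' ∈ univ.erase b', ∑ d' ∈ (univ.erase b').erase c', f b' * g c' * h d'))
    = (fun b => ∑ c ∈ univ.erase b, ∑ d ∈ (univ.erase b).erase c,
      ((n-3).factorial *
        ∑ b', ∑ c' ∈ univ.erase b', ∑ d' ∈ (univ.erase b').erase c', f b' * g c' * h d') *
        (f b * g c * h d)) from by
      funext b
      exact Finset.sum_congr rfl (fun c _ => Finset.sum_congr rfl (fun d _ => by ring))]
  simp only [← Finset.mul_sum]
  ring

lemma leaf4 (f g h p : Fin n → ℝ) :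
    ∑ b, ∑ c ∈ univ.erase b, ∑ d ∈ (univ.erase b).erase c,
        ∑ e ∈ ((univ.erase b).erase c).erase d,
        (f b * g c * h d * p e) * (∑ π : Perm (Fin n), f (π b) * g (π c) * h (π d) * p (π e))
      = (n-4).factorial *
        (∑ b, ∑ c ∈ univ.erase b, ∑ d ∈ (univ.erase b).erase c,
          ∑ e ∈ ((univ.erase b).erase c).erase d, f b * g c * h d * p e)^2 := by
  rw [Finset.sum_congr rfl (fun b _ => Finset.sum_congr rfl (fun c hc =>
    Finset.sum_congr rfl (fun d hd => Finset.sum_congr rfl (fun e he => by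
      have hbc : b ≠ c := (Finset.ne_of_mem_erase hc).symm
      have hbd : b ≠ d := (Finset.ne_of_mem_erase (Finset.mem_of_mem_erase hd)).symm
      have hcd : c ≠ d := (Finset.ne_of_mem_erase hd).symm
      have hbe : b ≠ e :=
        (Finset.ne_of_mem_erase (Finset.mem_of_mem_erase (Finset.mem_of_mem_erase he))).symm
      have hce : c ≠ e := (Finset.ne_of_mem_erase (Finset.mem_of_mem_erase he)).symm
      have hde : d ≠ e := (Finset.ne_of_mem_erase he).symm
      rw [key4 f g h p hbc hbd hbe hcd hce hde]))))]
  rw [show (fun (b : Fin n) => ∑ c ∈ univ.erase b, ∑ d ∈ (univ.erase b).erase c,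
      ∑ e ∈ ((univ.erase b).erase c).erase d,
      (f b * g c * h d * p e) * ((n-4).factorial *
        ∑ b', ∑ c' ∈ univ.erase b', ∑ d' ∈ (univ.erase b').erase c',
          ∑ e' ∈ ((univ.erase b').erase c').erase d', f b' * g c' * h d' * p e'))
    = (fun b => ∑ c ∈ univ.erase b, ∑ d ∈ (univ.erase b).erase c,
      ∑ e ∈ ((univ.erase b).erase c).erase d,
      ((n-4).factorial *
        ∑ b', ∑ c' ∈ univ.erase b', ∑ d' ∈ (univ.erase b').erase c',
          ∑ e' ∈ ((univ.erase b').erase c').erase d', f b' * g c' * h d' * p e') *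
        (f b * g c * h d * p e)) from by
      funext b
      exact Finset.sum_congr rfl (fun c _ => Finset.sum_congr rfl (fun d _ =>
        Finset.sum_congr rfl (fun e _ => by ring)))]
  simp only [← Finset.mul_sum]
  ring

lemma master (a : Fin n → ℝ) (hp1 : ∑ b, a b = 0) (hp3 : ∑ b, a b * a b * a b = 0) :
    ∑ π : Perm (Fin n), (∑ i, a i * a (π i))^4
      = (n-1).factorial * (∑ b, a b * a b * a b * a b)^2
        + (n-2).factorial * (4 * (∑ b, a b * a b * a b * a b)^2
            + 3 * ((∑ b, a b * a b)^2 - (∑ b, a b * a b * a b * a b))^2)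
        + (n-3).factorial * (6 * (2 * (∑ b, a b * a b * a b * a b) - (∑ b, a b * a b)^2)^2)
        + (n-4).factorial * (3 * (∑ b, a b * a b)^2 - 6 * (∑ b, a b * a b * a b * a b))^2 := by
  set P2 := ∑ b, a b * a b with hP2
  set P4 := ∑ b, a b * a b * a b * a b with hP4
  -- basic sum rewrites
  have sq4 : (∑ b, a b * (a b * a b * a b)) = P4 :=
    Finset.sum_congr rfl fun b _ => by ring
  have sq4' : (∑ b, a b * a b * (a b * a b)) = P4 :=
    Finset.sum_congr rfl fun b _ => by ring
  -- evaluations of distinct sums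
  have E31 : (∑ b, ∑ c ∈ univ.erase b, a b * a b * a b * a c) = -P4 := by
    have h : (∑ b, ∑ c ∈ univ.erase b, a b * a b * a b * a c)
        = (∑ b, a b * a b * a b) * (∑ b, a b) - ∑ b, a b * a b * a b * a b :=
      R2eval (fun x => a x * a x * a x) a
    rw [h, hp1, hp3]
    ring
  have E13 : (∑ b, ∑ c ∈ univ.erase b, a b * (a c * a c * a c)) = -P4 := by
    have h : (∑ b, ∑ c ∈ univ.erase b, a b * (a c * a c * a c))
        = (∑ b, a b) * (∑ b, a b * a b * a b) - ∑ b, a b * (a b * a b * a b) :=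
      R2eval a (fun x => a x * a x * a x)
    rw [h, hp1, sq4]
    ring
  have E22 : (∑ b, ∑ c ∈ univ.erase b, a b * a b * (a c * a c)) = P2^2 - P4 := by
    have h : (∑ b, ∑ c ∈ univ.erase b, a b * a b * (a c * a c))
        = (∑ b, a b * a b) * (∑ b, a b * a b) - ∑ b, a b * a b * (a b * a b) :=
      R2eval (fun x => a x * a x) (fun x => a x * a x)
    rw [h, sq4']
    ring
  have E211 : (∑ b, ∑ c ∈ univ.erase b, ∑ d ∈ (univ.erase b).erase c, a b * a b * a c * a d)
      = 2 * P4 - P2^2 := by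
    have h : (∑ b, ∑ c ∈ univ.erase b, ∑ d ∈ (univ.erase b).erase c, a b * a b * a c * a d)
        = (∑ b, a b * a b) * (∑ b, a b) * (∑ b, a b)
          - (∑ b, a b * a b * a b) * (∑ b, a b)
          - (∑ b, a b * a b * a b) * (∑ b, a b)
          - (∑ b, a b * a b) * (∑ b, a b * a b)
          + 2 * ∑ b, a b * a b * a b * a b :=
      R3eval (fun x => a x * a x) a a
    rw [h, hp1, hp3]
    ring
  have E121 : (∑ b, ∑ c ∈ univ.erase b, ∑ d ∈ (univ.erase b).erase c, a b * (a c * a c) * a d)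
      = 2 * P4 - P2^2 := by
    have h : (∑ b, ∑ c ∈ univ.erase b, ∑ d ∈ (univ.erase b).erase c, a b * (a c * a c) * a d)
        = (∑ b, a b) * (∑ b, a b * a b) * (∑ b, a b)
          - (∑ b, a b * (a b * a b)) * (∑ b, a b)
          - (∑ b, a b * a b) * (∑ b, a b * a b)
          - (∑ b, a b * a b * a b) * (∑ b, a b)
          + 2 * ∑ b, a b * (a b * a b) * a b :=
      R3eval a (fun x => a x * a x) a
    rw [h, hp1]
    have h2 : (∑ b, a b * (a b * a b) * a b) = P4 := Finset.sum_congr rfl fun b _ => by ring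
    rw [h2]
    ring
  have E112 : (∑ b, ∑ c ∈ univ.erase b, ∑ d ∈ (univ.erase b).erase c, a b * a c * (a d * a d))
      = 2 * P4 - P2^2 := by
    have h : (∑ b, ∑ c ∈ univ.erase b, ∑ d ∈ (univ.erase b).erase c, a b * a c * (a d * a d))
        = (∑ b, a b) * (∑ b, a b) * (∑ b, a b * a b)
          - (∑ b, a b * a b) * (∑ b, a b * a b)
          - (∑ b, a b * (a b * a b)) * (∑ b, a b)
          - (∑ b, a b * (a b * a b)) * (∑ b, a b)
          + 2 * ∑ b, a b * a b * (a b * a b) :=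
      R3eval a a (fun x => a x * a x)
    rw [h, hp1, sq4']
    ring
  have E1111 : (∑ b, ∑ c ∈ univ.erase b, ∑ d ∈ (univ.erase b).erase c,
      ∑ e ∈ ((univ.erase b).erase c).erase d, a b * a c * a d * a e)
      = 3 * P2^2 - 6 * P4 := by
    have h := R4eval (n := n) a a a a
    rw [h]
    have h3 : (∑ b, ∑ c ∈ univ.erase b, ∑ d ∈ (univ.erase b).erase c, a b * a c * a d)
        = (∑ b, a b) * (∑ b, a b) * (∑ b, a b)
          - (∑ b, a b * a b) * (∑ b, a b)
          - (∑ b, a b * a b) * (∑ b, a b)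
          - (∑ b, a b * a b) * (∑ b, a b)
          + 2 * ∑ b, a b * a b * a b := R3eval a a a
    have h211 : (∑ b, ∑ c ∈ univ.erase b, ∑ d ∈ (univ.erase b).erase c, (a b * a b) * a c * a d)
        = 2 * P4 - P2^2 := E211
    have h121 : (∑ b, ∑ c ∈ univ.erase b, ∑ d ∈ (univ.erase b).erase c, a b * (a c * a c) * a d)
        = 2 * P4 - P2^2 := E121
    have h112 : (∑ b, ∑ c ∈ univ.erase b, ∑ d ∈ (univ.erase b).erase c, a b * a c * (a d * a d))
        = 2 * P4 - P2^2 := E112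
    rw [h3, h211, h121, h112, hp1, hp3]
    ring
  -- leaf 1
  have H1 : (∑ b, (a b * a b * a b * a b) *
      ∑ π : Perm (Fin n), a (π b) * a (π b) * a (π b) * a (π b))
      = (n-1).factorial * P4^2 := leaf1 (fun x => a x * a x * a x * a x)
  -- 2-block leaves
  have H2a : (∑ b, ∑ c ∈ univ.erase b, (a b * a b * a b * a c) *
      ∑ π : Perm (Fin n), a (π b) * a (π b) * a (π b) * a (π c))
      = (n-2).factorial * P4^2 := by
    have h : (∑ b, ∑ c ∈ univ.erase b, (a b * a b * a b * a c) *
        ∑ π : Perm (Fin n), a (π b) * a (π b) * a (π b) * a (π c))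
        = (n-2).factorial * (∑ b, ∑ c ∈ univ.erase b, a b * a b * a b * a c)^2 :=
      leaf2 (fun x => a x * a x * a x) a
    rw [h, E31]
    ring
  have H2d : (∑ b, ∑ c ∈ univ.erase b, (a b * (a c * a c * a c)) *
      ∑ π : Perm (Fin n), a (π b) * (a (π c) * a (π c) * a (π c)))
      = (n-2).factorial * P4^2 := by
    have h : (∑ b, ∑ c ∈ univ.erase b, (a b * (a c * a c * a c)) *
        ∑ π : Perm (Fin n), a (π b) * (a (π c) * a (π c) * a (π c)))
        = (n-2).factorial * (∑ b, ∑ c ∈ univ.erase b, a b * (a c * a c * a c))^2 :=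
      leaf2 a (fun x => a x * a x * a x)
    rw [h, E13]
    ring
  have H2e : (∑ b, ∑ c ∈ univ.erase b, (a b * a b * (a c * a c)) *
      ∑ π : Perm (Fin n), a (π b) * a (π b) * (a (π c) * a (π c)))
      = (n-2).factorial * (P2^2 - P4)^2 := by
    have h : (∑ b, ∑ c ∈ univ.erase b, (a b * a b * (a c * a c)) *
        ∑ π : Perm (Fin n), a (π b) * a (π b) * (a (π c) * a (π c)))
        = (n-2).factorial * (∑ b, ∑ c ∈ univ.erase b, a b * a b * (a c * a c))^2 :=
      leaf2 (fun x => a x * a x) (fun x => a x * a x)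
    rw [h, E22]
  -- 3-block leaves
  have H3a : (∑ b, ∑ c ∈ univ.erase b, ∑ d ∈ (univ.erase b).erase c,
      (a b * a b * a c * a d) *
        ∑ π : Perm (Fin n), a (π b) * a (π b) * a (π c) * a (π d))
      = (n-3).factorial * (2 * P4 - P2^2)^2 := by
    have h : (∑ b, ∑ c ∈ univ.erase b, ∑ d ∈ (univ.erase b).erase c,
        (a b * a b * a c * a d) *
          ∑ π : Perm (Fin n), a (π b) * a (π b) * a (π c) * a (π d))
        = (n-3).factorial *
          (∑ b, ∑ c ∈ univ.erase b, ∑ d ∈ (univ.erase b).erase c, a b * a b * a c * a d)^2 :=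
      leaf3 (fun x => a x * a x) a a
    rw [h, E211]
  have H3d : (∑ b, ∑ c ∈ univ.erase b, ∑ d ∈ (univ.erase b).erase c,
      (a b * (a c * a c) * a d) *
        ∑ π : Perm (Fin n), a (π b) * (a (π c) * a (π c)) * a (π d))
      = (n-3).factorial * (2 * P4 - P2^2)^2 := by
    have h : (∑ b, ∑ c ∈ univ.erase b, ∑ d ∈ (univ.erase b).erase c,
        (a b * (a c * a c) * a d) *
          ∑ π : Perm (Fin n), a (π b) * (a (π c) * a (π c)) * a (π d))
        = (n-3).factorial *
          (∑ b, ∑ c ∈ univ.erase b, ∑ d ∈ (univ.erase b).erase c, a b * (a c * a c) * a d)^2 :=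
      leaf3 a (fun x => a x * a x) a
    rw [h, E121]
  have H3f : (∑ b, ∑ c ∈ univ.erase b, ∑ d ∈ (univ.erase b).erase c,
      (a b * a c * (a d * a d)) *
        ∑ π : Perm (Fin n), a (π b) * a (π c) * (a (π d) * a (π d)))
      = (n-3).factorial * (2 * P4 - P2^2)^2 := by
    have h : (∑ b, ∑ c ∈ univ.erase b, ∑ d ∈ (univ.erase b).erase c,
        (a b * a c * (a d * a d)) *
          ∑ π : Perm (Fin n), a (π b) * a (π c) * (a (π d) * a (π d)))
        = (n-3).factorial *
          (∑ b, ∑ c ∈ univ.erase b, ∑ d ∈ (univ.erase b).erase c, a b * a c * (a d * a d))^2 :=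
      leaf3 a a (fun x => a x * a x)
    rw [h, E112]
  -- 4-block leaf
  have H4 : (∑ b, ∑ c ∈ univ.erase b, ∑ d ∈ (univ.erase b).erase c,
      ∑ e ∈ ((univ.erase b).erase c).erase d,
      (a b * a c * a d * a e) *
        ∑ π : Perm (Fin n), a (π b) * a (π c) * a (π d) * a (π e))
      = (n-4).factorial * (3 * P2^2 - 6 * P4)^2 := by
    have h : (∑ b, ∑ c ∈ univ.erase b, ∑ d ∈ (univ.erase b).erase c,
        ∑ e ∈ ((univ.erase b).erase c).erase d,
        (a b * a c * a d * a e) *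
          ∑ π : Perm (Fin n), a (π b) * a (π c) * a (π d) * a (π e))
        = (n-4).factorial *
          (∑ b, ∑ c ∈ univ.erase b, ∑ d ∈ (univ.erase b).erase c,
            ∑ e ∈ ((univ.erase b).erase c).erase d, a b * a c * a d * a e)^2 :=
      leaf4 a a a a
    rw [h, E1111]
  -- conversions of non-canonical leaves
  have C_bbcb : (∑ b, ∑ c ∈ univ.erase b,
      (a b * a b * a c * a b) * ∑ π : Perm (Fin n), a (π b) * a (π b) * a (π c) * a (π b))
      = (n-2).factorial * P4^2 := by
    have hcv : (∑ b, ∑ c ∈ univ.erase b,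
        (a b * a b * a c * a b) * ∑ π : Perm (Fin n), a (π b) * a (π b) * a (π c) * a (π b))
        = (∑ b, ∑ c ∈ univ.erase b,
        (a b * a b * a b * a c) * ∑ π : Perm (Fin n), a (π b) * a (π b) * a (π b) * a (π c)) :=
      Finset.sum_congr rfl fun b _ => Finset.sum_congr rfl fun c _ => by
        rw [Finset.sum_congr rfl fun (π : Perm (Fin n)) _ =>
          (by ring : a (π b) * a (π b) * a (π c) * a (π b) = a (π b) * a (π b) * a (π b) * a (π c))]
        ring
    rw [hcv]
    exact H2a
  have C_bcbb : (∑ b, ∑ c ∈ univ.erase b,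
      (a b * a c * a b * a b) * ∑ π : Perm (Fin n), a (π b) * a (π c) * a (π b) * a (π b))
      = (n-2).factorial * P4^2 := by
    have hcv : (∑ b, ∑ c ∈ univ.erase b,
        (a b * a c * a b * a b) * ∑ π : Perm (Fin n), a (π b) * a (π c) * a (π b) * a (π b))
        = (∑ b, ∑ c ∈ univ.erase b,
        (a b * a b * a b * a c) * ∑ π : Perm (Fin n), a (π b) * a (π b) * a (π b) * a (π c)) :=
      Finset.sum_congr rfl fun b _ => Finset.sum_congr rfl fun c _ => by
        rw [Finset.sum_congr rfl fun (π : Perm (Fin n)) _ =>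
          (by ring : a (π b) * a (π c) * a (π b) * a (π b) = a (π b) * a (π b) * a (π b) * a (π c))]
        ring
    rw [hcv]
    exact H2a
  have C_bccc : (∑ b, ∑ c ∈ univ.erase b,
      (a b * a c * a c * a c) * ∑ π : Perm (Fin n), a (π b) * a (π c) * a (π c) * a (π c))
      = (n-2).factorial * P4^2 := by
    have hcv : (∑ b, ∑ c ∈ univ.erase b,
        (a b * a c * a c * a c) * ∑ π : Perm (Fin n), a (π b) * a (π c) * a (π c) * a (π c))
        = (∑ b, ∑ c ∈ univ.erase b,
        (a b * (a c * a c * a c)) * ∑ π : Perm (Fin n), a (π b) * (a (π c) * a (π c) * a (π c))) :=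
      Finset.sum_congr rfl fun b _ => Finset.sum_congr rfl fun c _ => by
        rw [Finset.sum_congr rfl fun (π : Perm (Fin n)) _ =>
          (by ring : a (π b) * a (π c) * a (π c) * a (π c) = a (π b) * (a (π c) * a (π c) * a (π c)))]
        ring
    rw [hcv]
    exact H2d
  have C_bbcc : (∑ b, ∑ c ∈ univ.erase b,
      (a b * a b * a c * a c) * ∑ π : Perm (Fin n), a (π b) * a (π b) * a (π c) * a (π c))
      = (n-2).factorial * (P2^2 - P4)^2 := by
    have hcv : (∑ b, ∑ c ∈ univ.erase b,
        (a b * a b * a c * a c) * ∑ π : Perm (Fin n), a (π b) * a (π b) * a (π c) * a (π c))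
        = (∑ b, ∑ c ∈ univ.erase b,
        (a b * a b * (a c * a c)) * ∑ π : Perm (Fin n), a (π b) * a (π b) * (a (π c) * a (π c))) :=
      Finset.sum_congr rfl fun b _ => Finset.sum_congr rfl fun c _ => by
        rw [Finset.sum_congr rfl fun (π : Perm (Fin n)) _ =>
          (by ring : a (π b) * a (π b) * a (π c) * a (π c) = a (π b) * a (π b) * (a (π c) * a (π c)))]
        ring
    rw [hcv]
    exact H2e
  have C_bcbc : (∑ b, ∑ c ∈ univ.erase b,
      (a b * a c * a b * a c) * ∑ π : Perm (Fin n), a (π b) * a (π c) * a (π b) * a (π c))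
      = (n-2).factorial * (P2^2 - P4)^2 := by
    have hcv : (∑ b, ∑ c ∈ univ.erase b,
        (a b * a c * a b * a c) * ∑ π : Perm (Fin n), a (π b) * a (π c) * a (π b) * a (π c))
        = (∑ b, ∑ c ∈ univ.erase b,
        (a b * a b * (a c * a c)) * ∑ π : Perm (Fin n), a (π b) * a (π b) * (a (π c) * a (π c))) :=
      Finset.sum_congr rfl fun b _ => Finset.sum_congr rfl fun c _ => by
        rw [Finset.sum_congr rfl fun (π : Perm (Fin n)) _ =>
          (by ring : a (π b) * a (π c) * a (π b) * a (π c) = a (π b) * a (π b) * (a (π c) * a (π c)))]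
        ring
    rw [hcv]
    exact H2e
  have C_bccb : (∑ b, ∑ c ∈ univ.erase b,
      (a b * a c * a c * a b) * ∑ π : Perm (Fin n), a (π b) * a (π c) * a (π c) * a (π b))
      = (n-2).factorial * (P2^2 - P4)^2 := by
    have hcv : (∑ b, ∑ c ∈ univ.erase b,
        (a b * a c * a c * a b) * ∑ π : Perm (Fin n), a (π b) * a (π c) * a (π c) * a (π b))
        = (∑ b, ∑ c ∈ univ.erase b,
        (a b * a b * (a c * a c)) * ∑ π : Perm (Fin n), a (π b) * a (π b) * (a (π c) * a (π c))) :=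
      Finset.sum_congr rfl fun b _ => Finset.sum_congr rfl fun c _ => by
        rw [Finset.sum_congr rfl fun (π : Perm (Fin n)) _ =>
          (by ring : a (π b) * a (π c) * a (π c) * a (π b) = a (π b) * a (π b) * (a (π c) * a (π c)))]
        ring
    rw [hcv]
    exact H2e
  have C_bcbd : (∑ b, ∑ c ∈ univ.erase b, ∑ d ∈ (univ.erase b).erase c,
      (a b * a c * a b * a d) * ∑ π : Perm (Fin n), a (π b) * a (π c) * a (π b) * a (π d))
      = (n-3).factorial * (2 * P4 - P2^2)^2 := by
    have hcv : (∑ b, ∑ c ∈ univ.erase b, ∑ d ∈ (univ.erase b).erase c,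
        (a b * a c * a b * a d) * ∑ π : Perm (Fin n), a (π b) * a (π c) * a (π b) * a (π d))
        = (∑ b, ∑ c ∈ univ.erase b, ∑ d ∈ (univ.erase b).erase c,
        (a b * a b * a c * a d) * ∑ π : Perm (Fin n), a (π b) * a (π b) * a (π c) * a (π d)) :=
      Finset.sum_congr rfl fun b _ => Finset.sum_congr rfl fun c _ =>
        Finset.sum_congr rfl fun d _ => by
        rw [Finset.sum_congr rfl fun (π : Perm (Fin n)) _ =>
          (by ring : a (π b) * a (π c) * a (π b) * a (π d) = a (π b) * a (π b) * a (π c) * a (π d))]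
        ring
    rw [hcv]
    exact H3a
  have C_bcdb : (∑ b, ∑ c ∈ univ.erase b, ∑ d ∈ (univ.erase b).erase c,
      (a b * a c * a d * a b) * ∑ π : Perm (Fin n), a (π b) * a (π c) * a (π d) * a (π b))
      = (n-3).factorial * (2 * P4 - P2^2)^2 := by
    have hcv : (∑ b, ∑ c ∈ univ.erase b, ∑ d ∈ (univ.erase b).erase c,
        (a b * a c * a d * a b) * ∑ π : Perm (Fin n), a (π b) * a (π c) * a (π d) * a (π b))
        = (∑ b, ∑ c ∈ univ.erase b, ∑ d ∈ (univ.erase b).erase c,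
        (a b * a b * a c * a d) * ∑ π : Perm (Fin n), a (π b) * a (π b) * a (π c) * a (π d)) :=
      Finset.sum_congr rfl fun b _ => Finset.sum_congr rfl fun c _ =>
        Finset.sum_congr rfl fun d _ => by
        rw [Finset.sum_congr rfl fun (π : Perm (Fin n)) _ =>
          (by ring : a (π b) * a (π c) * a (π d) * a (π b) = a (π b) * a (π b) * a (π c) * a (π d))]
        ring
    rw [hcv]
    exact H3a
  have C_bccd : (∑ b, ∑ c ∈ univ.erase b, ∑ d ∈ (univ.erase b).erase c,
      (a b * a c * a c * a d) * ∑ π : Perm (Fin n), a (π b) * a (π c) * a (π c) * a (π d))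
      = (n-3).factorial * (2 * P4 - P2^2)^2 := by
    have hcv : (∑ b, ∑ c ∈ univ.erase b, ∑ d ∈ (univ.erase b).erase c,
        (a b * a c * a c * a d) * ∑ π : Perm (Fin n), a (π b) * a (π c) * a (π c) * a (π d))
        = (∑ b, ∑ c ∈ univ.erase b, ∑ d ∈ (univ.erase b).erase c,
        (a b * (a c * a c) * a d) * ∑ π : Perm (Fin n), a (π b) * (a (π c) * a (π c)) * a (π d)) :=
      Finset.sum_congr rfl fun b _ => Finset.sum_congr rfl fun c _ =>
        Finset.sum_congr rfl fun d _ => by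
        rw [Finset.sum_congr rfl fun (π : Perm (Fin n)) _ =>
          (by ring : a (π b) * a (π c) * a (π c) * a (π d) = a (π b) * (a (π c) * a (π c)) * a (π d))]
        ring
    rw [hcv]
    exact H3d
  have C_bcdc : (∑ b, ∑ c ∈ univ.erase b, ∑ d ∈ (univ.erase b).erase c,
      (a b * a c * a d * a c) * ∑ π : Perm (Fin n), a (π b) * a (π c) * a (π d) * a (π c))
      = (n-3).factorial * (2 * P4 - P2^2)^2 := by
    have hcv : (∑ b, ∑ c ∈ univ.erase b, ∑ d ∈ (univ.erase b).erase c,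
        (a b * a c * a d * a c) * ∑ π : Perm (Fin n), a (π b) * a (π c) * a (π d) * a (π c))
        = (∑ b, ∑ c ∈ univ.erase b, ∑ d ∈ (univ.erase b).erase c,
        (a b * (a c * a c) * a d) * ∑ π : Perm (Fin n), a (π b) * (a (π c) * a (π c)) * a (π d)) :=
      Finset.sum_congr rfl fun b _ => Finset.sum_congr rfl fun c _ =>
        Finset.sum_congr rfl fun d _ => by
        rw [Finset.sum_congr rfl fun (π : Perm (Fin n)) _ =>
          (by ring : a (π b) * a (π c) * a (π d) * a (π c) = a (π b) * (a (π c) * a (π c)) * a (π d))]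
        ring
    rw [hcv]
    exact H3d
  have C_bcdd : (∑ b, ∑ c ∈ univ.erase b, ∑ d ∈ (univ.erase b).erase c,
      (a b * a c * a d * a d) * ∑ π : Perm (Fin n), a (π b) * a (π c) * a (π d) * a (π d))
      = (n-3).factorial * (2 * P4 - P2^2)^2 := by
    have hcv : (∑ b, ∑ c ∈ univ.erase b, ∑ d ∈ (univ.erase b).erase c,
        (a b * a c * a d * a d) * ∑ π : Perm (Fin n), a (π b) * a (π c) * a (π d) * a (π d))
        = (∑ b, ∑ c ∈ univ.erase b, ∑ d ∈ (univ.erase b).erase c,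
        (a b * a c * (a d * a d)) * ∑ π : Perm (Fin n), a (π b) * a (π c) * (a (π d) * a (π d))) :=
      Finset.sum_congr rfl fun b _ => Finset.sum_congr rfl fun c _ =>
        Finset.sum_congr rfl fun d _ => by
        rw [Finset.sum_congr rfl fun (π : Perm (Fin n)) _ =>
          (by ring : a (π b) * a (π c) * a (π d) * a (π d) = a (π b) * a (π c) * (a (π d) * a (π d)))]
        ring
    rw [hcv]
    exact H3f
  -- assembly
  calc ∑ π : Perm (Fin n), (∑ i, a i * a (π i))^4
      = ∑ i, ∑ j, ∑ k, ∑ l, (a i * a j * a k * a l) *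
          ∑ π : Perm (Fin n), a (π i) * a (π j) * a (π k) * a (π l) := expand_sum a
    _ = (∑ b, (a b * a b * a b * a b) *
          ∑ π : Perm (Fin n), a (π b) * a (π b) * a (π b) * a (π b))
        + (∑ b, ∑ c ∈ univ.erase b,
            ((a b * a b * a b * a c) *
              (∑ π : Perm (Fin n), a (π b) * a (π b) * a (π b) * a (π c))
            + (a b * a b * a c * a b) *
              (∑ π : Perm (Fin n), a (π b) * a (π b) * a (π c) * a (π b))
            + (a b * a c * a b * a b) *
              (∑ π : Perm (Fin n), a (π b) * a (π c) * a (π b) * a (π b))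
            + (a b * a c * a c * a c) *
              (∑ π : Perm (Fin n), a (π b) * a (π c) * a (π c) * a (π c))
            + (a b * a b * a c * a c) *
              (∑ π : Perm (Fin n), a (π b) * a (π b) * a (π c) * a (π c))
            + (a b * a c * a b * a c) *
              (∑ π : Perm (Fin n), a (π b) * a (π c) * a (π b) * a (π c))
            + (a b * a c * a c * a b) *
              (∑ π : Perm (Fin n), a (π b) * a (π c) * a (π c) * a (π b))))
        + (∑ b, ∑ c ∈ univ.erase b, ∑ d ∈ (univ.erase b).erase c,
            ((a b * a b * a c * a d) *
              (∑ π : Perm (Fin n), a (π b) * a (π b) * a (π c) * a (π d))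
            + (a b * a c * a b * a d) *
              (∑ π : Perm (Fin n), a (π b) * a (π c) * a (π b) * a (π d))
            + (a b * a c * a d * a b) *
              (∑ π : Perm (Fin n), a (π b) * a (π c) * a (π d) * a (π b))
            + (a b * a c * a c * a d) *
              (∑ π : Perm (Fin n), a (π b) * a (π c) * a (π c) * a (π d))
            + (a b * a c * a d * a c) *
              (∑ π : Perm (Fin n), a (π b) * a (π c) * a (π d) * a (π c))
            + (a b * a c * a d * a d) *
              (∑ π : Perm (Fin n), a (π b) * a (π c) * a (π d) * a (π d))))
        + (∑ b, ∑ c ∈ univ.erase b, ∑ d ∈ (univ.erase b).erase c,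
            ∑ e ∈ ((univ.erase b).erase c).erase d,
            (a b * a c * a d * a e) *
              (∑ π : Perm (Fin n), a (π b) * a (π c) * a (π d) * a (π e))) :=
        split4 (fun i j k l => (a i * a j * a k * a l) *
          ∑ π : Perm (Fin n), a (π i) * a (π j) * a (π k) * a (π l))
    _ = _ := by
        simp only [Finset.sum_add_distrib]
        rw [H1, H2a, C_bbcb, C_bcbb, C_bccc, C_bbcc, C_bcbc, C_bccb,
          H3a, C_bcbd, C_bcdb, C_bccd, C_bcdc, C_bcdd, H4]
        ring

lemma S1 (n : ℕ) : ∑ i ∈ Finset.range n, (i:ℝ) = n*(n-1)/2 := by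
  induction n with
  | zero => simp
  | succ m ih => rw [Finset.sum_range_succ, ih]; push_cast; ring

lemma S2 (n : ℕ) : ∑ i ∈ Finset.range n, (i:ℝ)^2 = n*(n-1)*(2*n-1)/6 := by
  induction n with
  | zero => simp
  | succ m ih => rw [Finset.sum_range_succ, ih]; push_cast; ring

lemma S3 (n : ℕ) : ∑ i ∈ Finset.range n, (i:ℝ)^3 = (n*(n-1)/2)^2 := by
  induction n with
  | zero => simp
  | succ m ih => rw [Finset.sum_range_succ, ih]; push_cast; ring

lemma S4 (n : ℕ) : ∑ i ∈ Finset.range n, (i:ℝ)^4 = n*(n-1)*(2*n-1)*(3*n^2-3*n-1)/30 := by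
  induction n with
  | zero => simp
  | succ m ih => rw [Finset.sum_range_succ, ih]; push_cast; ring

section
variable {n : ℕ} {a : Fin n → ℝ} (ha : ∀ i, a i = (i : ℝ) + 1 - ((n : ℝ) + 1) / 2)
include ha

lemma asum1 : ∑ b, a b = 0 := by
  have h : ∑ b, a b = ∑ i ∈ Finset.range n, ((i:ℝ) + 1 - ((n : ℝ) + 1) / 2) := by
    rw [← Fin.sum_univ_eq_sum_range (fun i => ((i:ℝ) + 1 - ((n : ℝ) + 1) / 2)) n]
    exact Finset.sum_congr rfl fun b _ => ha b
  rw [h, Finset.sum_congr rfl (fun i (_ : i ∈ Finset.range n) =>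
    (by ring : ((i:ℝ) + 1 - ((n : ℝ) + 1) / 2)
      = (i:ℝ) + (1 - ((n : ℝ) + 1) / 2))), Finset.sum_add_distrib, Finset.sum_const,
    Finset.card_range, nsmul_eq_mul, S1]
  ring

lemma asum2 : ∑ b, a b * a b = (n:ℝ) * ((n:ℝ)^2 - 1) / 12 := by
  have h : ∑ b, a b * a b = ∑ i ∈ Finset.range n,
      (((i:ℝ) + 1 - ((n : ℝ) + 1) / 2) * ((i:ℝ) + 1 - ((n : ℝ) + 1) / 2)) := by
    rw [← Fin.sum_univ_eq_sum_range
      (fun i => (((i:ℝ) + 1 - ((n : ℝ) + 1) / 2) * ((i:ℝ) + 1 - ((n : ℝ) + 1) / 2))) n]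
    exact Finset.sum_congr rfl fun b _ => by rw [ha b]
  rw [h, Finset.sum_congr rfl (fun i (_ : i ∈ Finset.range n) =>
    (by ring : (((i:ℝ) + 1 - ((n : ℝ) + 1) / 2) * ((i:ℝ) + 1 - ((n : ℝ) + 1) / 2))
      = (i:ℝ)^2 + (2 - ((n:ℝ)+1)) * (i:ℝ) + (1 - ((n : ℝ) + 1) / 2)^2)),
    Finset.sum_add_distrib, Finset.sum_add_distrib, ← Finset.mul_sum, Finset.sum_const,
    Finset.card_range, nsmul_eq_mul, S1, S2]
  ring

lemma asum3 : ∑ b, a b * a b * a b = 0 := by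
  have h : ∑ b, a b * a b * a b = ∑ i ∈ Finset.range n,
      (((i:ℝ) + 1 - ((n : ℝ) + 1) / 2) * ((i:ℝ) + 1 - ((n : ℝ) + 1) / 2)
        * ((i:ℝ) + 1 - ((n : ℝ) + 1) / 2)) := by
    rw [← Fin.sum_univ_eq_sum_range
      (fun i => (((i:ℝ) + 1 - ((n : ℝ) + 1) / 2) * ((i:ℝ) + 1 - ((n : ℝ) + 1) / 2)
        * ((i:ℝ) + 1 - ((n : ℝ) + 1) / 2))) n]
    exact Finset.sum_congr rfl fun b _ => by rw [ha b]
  rw [h, Finset.sum_congr rfl (fun i (_ : i ∈ Finset.range n) =>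
    (by ring : (((i:ℝ) + 1 - ((n : ℝ) + 1) / 2) * ((i:ℝ) + 1 - ((n : ℝ) + 1) / 2)
        * ((i:ℝ) + 1 - ((n : ℝ) + 1) / 2))
      = (i:ℝ)^3 + (3 * (1 - ((n:ℝ)+1)/2)) * (i:ℝ)^2
        + (3 * (1 - ((n:ℝ)+1)/2)^2) * (i:ℝ) + (1 - ((n : ℝ) + 1) / 2)^3)),
    Finset.sum_add_distrib, Finset.sum_add_distrib, Finset.sum_add_distrib,
    ← Finset.mul_sum, ← Finset.mul_sum, Finset.sum_const,
    Finset.card_range, nsmul_eq_mul, S1, S2, S3]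
  ring

lemma asum4 : ∑ b, a b * a b * a b * a b
    = (n:ℝ) * ((n:ℝ)^2 - 1) * (3 * (n:ℝ)^2 - 7) / 240 := by
  have h : ∑ b, a b * a b * a b * a b = ∑ i ∈ Finset.range n,
      (((i:ℝ) + 1 - ((n : ℝ) + 1) / 2) * ((i:ℝ) + 1 - ((n : ℝ) + 1) / 2)
        * ((i:ℝ) + 1 - ((n : ℝ) + 1) / 2) * ((i:ℝ) + 1 - ((n : ℝ) + 1) / 2)) := by
    rw [← Fin.sum_univ_eq_sum_range
      (fun i => (((i:ℝ) + 1 - ((n : ℝ) + 1) / 2) * ((i:ℝ) + 1 - ((n : ℝ) + 1) / 2)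
        * ((i:ℝ) + 1 - ((n : ℝ) + 1) / 2) * ((i:ℝ) + 1 - ((n : ℝ) + 1) / 2))) n]
    exact Finset.sum_congr rfl fun b _ => by rw [ha b]
  rw [h, Finset.sum_congr rfl (fun i (_ : i ∈ Finset.range n) =>
    (by ring : (((i:ℝ) + 1 - ((n : ℝ) + 1) / 2) * ((i:ℝ) + 1 - ((n : ℝ) + 1) / 2)
        * ((i:ℝ) + 1 - ((n : ℝ) + 1) / 2) * ((i:ℝ) + 1 - ((n : ℝ) + 1) / 2))
      = (i:ℝ)^4 + (4 * (1 - ((n:ℝ)+1)/2)) * (i:ℝ)^3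
        + (6 * (1 - ((n:ℝ)+1)/2)^2) * (i:ℝ)^2
        + (4 * (1 - ((n:ℝ)+1)/2)^3) * (i:ℝ) + (1 - ((n : ℝ) + 1) / 2)^4)),
    Finset.sum_add_distrib, Finset.sum_add_distrib, Finset.sum_add_distrib,
    Finset.sum_add_distrib, ← Finset.mul_sum, ← Finset.mul_sum, ← Finset.mul_sum,
    Finset.sum_const, Finset.card_range, nsmul_eq_mul, S1, S2, S3, S4]
  ring

end

set_option maxHeartbeats 4000000 in
/-- Fourth null moment of Spearman's rho. -/
theorem stmt4 (n : ℕ) (hn : 2 ≤ n)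
    (a : Fin n → ℝ) (ha : ∀ i, a i = (i : ℝ) + 1 - ((n : ℝ) + 1) / 2)
    (ρ : Perm (Fin n) → ℝ)
    (hρ : ∀ π, ρ π = (12 / ((n : ℝ) * ((n : ℝ) ^ 2 - 1))) * ∑ i, a i * a (π i))
    (M : ℕ → ℝ)
    (hM : ∀ r, M r = (1 / (n.factorial : ℝ)) * ∑ π : Perm (Fin n), (ρ π) ^ r) :
    M 4 = 3 * (25 * (n : ℝ) ^ 3 - 38 * (n : ℝ) ^ 2 - 35 * (n : ℝ) + 72) /
      (25 * (n : ℝ) * ((n : ℝ) - 1) ^ 3 * ((n : ℝ) + 1)) := by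
  have hmaster := master a (asum1 ha) (asum3 ha)
  rw [asum2 ha, asum4 ha] at hmaster
  have hsum : ∑ π : Perm (Fin n), (ρ π) ^ 4
      = (12 / ((n : ℝ) * ((n : ℝ) ^ 2 - 1)))^4 *
        ∑ π : Perm (Fin n), (∑ i, a i * a (π i))^4 := by
    rw [Finset.mul_sum]
    exact Finset.sum_congr rfl fun π _ => by rw [hρ π]; ring
  rw [hM 4, hsum, hmaster]
  -- now pure arithmetic in n
  rcases Nat.lt_or_ge n 4 with h4 | h4
  · interval_cases n
    · norm_num [Nat.factorial]
    · norm_num [Nat.factorial]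
  · obtain ⟨m, rfl⟩ := Nat.exists_eq_add_of_le h4
    have e1 : 4 + m - 1 = m + 3 := by omega
    have e2 : 4 + m - 2 = m + 2 := by omega
    have e3 : 4 + m - 3 = m + 1 := by omega
    have e4 : 4 + m - 4 = m := by omega
    have f1 : ((m+3).factorial : ℝ) = (m+3) * (m+2) * (m+1) * m.factorial := by
      rw [Nat.factorial_succ, Nat.factorial_succ, Nat.factorial_succ]; push_cast; ring
    have f2 : ((m+2).factorial : ℝ) = (m+2) * (m+1) * m.factorial := by
      rw [Nat.factorial_succ, Nat.factorial_succ]; push_cast; ring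
    have f3 : ((m+1).factorial : ℝ) = (m+1) * m.factorial := by
      rw [Nat.factorial_succ]; push_cast; ring
    have f0 : ((4+m).factorial : ℝ) = (m+4) * (m+3) * (m+2) * (m+1) * m.factorial := by
      have : 4 + m = (m+3) + 1 := by omega
      rw [this]
      push_cast [Nat.factorial_succ]
      ring
    rw [e1, e2, e3, e4, f1, f2, f3, f0]
    have hK : ((m:ℝ)+4) * ((m:ℝ)+3) * ((m:ℝ)+2) * ((m:ℝ)+1) * (m.factorial:ℝ) ≠ 0 := by
      have hf : (0:ℝ) < (m.factorial:ℝ) := by exact_mod_cast m.factorial_pos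
      positivity
    rw [one_div, inv_mul_eq_div, div_eq_iff hK]
    have hcast : ((4 + m : ℕ) : ℝ) = (m : ℝ) + 4 := by push_cast; ring
    rw [hcast]
    have h1 : (m:ℝ) + 1 ≠ 0 := by positivity
    have h2 : (m:ℝ) + 2 ≠ 0 := by positivity
    have h3 : (m:ℝ) + 3 ≠ 0 := by positivity
    have h4' : (m:ℝ) + 4 ≠ 0 := by positivity
    have h5 : (m:ℝ) + 5 ≠ 0 := by positivity
    have hsq : ((m:ℝ)+4)^2 - 1 ≠ 0 := by
      have hfacts : ((m:ℝ)+4)^2 - 1 = ((m:ℝ)+3) * ((m:ℝ)+5) := by ring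
      rw [hfacts]; exact mul_ne_zero h3 h5
    have hd1 : ((m:ℝ)+4) - 1 ≠ 0 := by
      have : ((m:ℝ)+4) - 1 = (m:ℝ)+3 := by ring
      rw [this]; exact h3
    have hd2 : ((m:ℝ)+4) + 1 ≠ 0 := by
      have : ((m:ℝ)+4) + 1 = (m:ℝ)+5 := by ring
      rw [this]; exact h5
    field_simp
    ring
end

section
/- For every integer n ≥ 2, the fourth null moment of Kendall's tau satisfies M_{τ,4}(n) = 4(100n⁴ + 328n³ − 127n² − 997n − 372) / (675 n³ (n−1)³). -/
open Finset Equiv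
def invCount {N : ℕ} (π : Perm (Fin N)) : ℕ :=
  (Finset.univ.filter
    (fun ij : Fin N × Fin N => ij.1 < ij.2 ∧ π ij.2 < π ij.1)).card
lemma invCount_eq_sum {N : ℕ} (π : Perm (Fin N)) :
    invCount π = ∑ a : Fin N, ∑ b : Fin N, if a < b ∧ π b < π a then 1 else 0 := by
  rw [invCount, Finset.card_filter, Fintype.sum_prod_type]
def insF {n : ℕ} (p : Fin (n + 1) × Perm (Fin n)) : Perm (Fin (n + 1)) :=
  ((finSuccEquiv' p.1).trans p.2.optionCongr).trans (finSuccEquiv' (Fin.last n)).symm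
lemma insF_apply_fst {n : ℕ} (p : Fin (n + 1) × Perm (Fin n)) : insF p p.1 = Fin.last n := by
  simp [insF]
lemma insF_apply_succAbove {n : ℕ} (p : Fin (n + 1) × Perm (Fin n)) (k : Fin n) :
    insF p (p.1.succAbove k) = (p.2 k).castSucc := by
  simp [insF, finSuccEquiv'_succAbove, finSuccEquiv'_symm_some]

lemma count_le (n i : ℕ) :
    (∑ l ∈ Finset.range n, if i ≤ l then 1 else 0) = n - i := by
  induction n with
  | zero => simp
  | succ m ih =>
    rw [Finset.sum_range_succ, ih]
    by_cases h : i ≤ m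
    · rw [if_pos h]; omega
    · rw [if_neg h]; omega

lemma invCount_insF {n : ℕ} (i : Fin (n + 1)) (σ : Perm (Fin n)) :
    invCount (insF (i, σ)) = (n - (i:ℕ)) + invCount σ := by
  rw [invCount_eq_sum]
  rw [Fin.sum_univ_succAbove _ i]
  have h1 : ∀ b, (if i < b ∧ insF (i,σ) b < insF (i,σ) i then 1 else 0)
      = (if i < b then 1 else 0) := by
    intro b
    by_cases hb : b = i
    · subst hb; simp
    · obtain ⟨k, hk⟩ := Fin.exists_succAbove_eq hb
      rw [← hk, insF_apply_succAbove (i,σ) k, insF_apply_fst (i,σ)]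
      simp [Fin.castSucc_lt_last]
  have h2 : ∀ k : Fin n, (∑ b : Fin (n+1),
      if i.succAbove k < b ∧ insF (i,σ) b < insF (i,σ) (i.succAbove k) then 1 else 0)
      = ∑ l : Fin n, if k < l ∧ σ l < σ k then 1 else 0 := by
    intro k
    rw [Fin.sum_univ_succAbove _ i]
    have hz : (if i.succAbove k < i ∧ insF (i,σ) i < insF (i,σ) (i.succAbove k) then 1 else 0) = 0 := by
      rw [if_neg]
      rintro ⟨-, h⟩
      rw [insF_apply_fst (i,σ), insF_apply_succAbove (i,σ)] at h
      exact absurd h (Fin.castSucc_lt_last _).not_gt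
    rw [hz, zero_add]
    refine Finset.sum_congr rfl fun l _ => ?_
    simp only [insF_apply_succAbove (i,σ), Fin.succAbove_lt_succAbove_iff,
      Fin.castSucc_lt_castSucc_iff]
  rw [Finset.sum_congr rfl (fun b _ => h1 b), Finset.sum_congr rfl (fun k _ => h2 k)]
  have h3 : (∑ b : Fin (n+1), if i < b then 1 else 0) = n - (i:ℕ) := by
    rw [Fin.sum_univ_succAbove _ i]
    simp only [lt_self_iff_false, if_false, zero_add]
    rw [← count_le n (i:ℕ), ← Fin.sum_univ_eq_sum_range (fun l => if (i:ℕ) ≤ l then 1 else 0) n]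
    refine Finset.sum_congr rfl fun l _ => ?_
    simp only [Fin.lt_succAbove_iff_le_castSucc, Fin.le_def, Fin.coe_castSucc]
  rw [h3, invCount_eq_sum]

lemma insF_bijective (n : ℕ) : Function.Bijective (insF (n := n)) := by
  rw [Fintype.bijective_iff_injective_and_card]
  constructor
  · rintro ⟨i, σ⟩ ⟨i', σ'⟩ h
    have hi : i = i' := by
      by_contra hne
      obtain ⟨k, hk⟩ := Fin.exists_succAbove_eq hne
      have h2 := insF_apply_succAbove (i', σ') k
      rw [hk] at h2
      rw [← h, insF_apply_fst (i, σ)] at h2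
      exact absurd h2 (Fin.castSucc_lt_last _).ne'
    subst hi
    have hσ : σ = σ' := by
      ext k
      have h2 := insF_apply_succAbove (i, σ) k
      rw [h, insF_apply_succAbove (i, σ') k] at h2
      exact congrArg Fin.val (Fin.castSucc_injective _ h2.symm)
    rw [hσ]
  · simp [Fintype.card_perm, Nat.factorial_succ]

lemma sum_perm_succ (n : ℕ) (h : ℕ → ℝ) :
    ∑ π : Perm (Fin (n+1)), h (invCount π)
      = ∑ j ∈ Finset.range (n+1), ∑ σ : Perm (Fin n), h (j + invCount σ) := by
  rw [← Fintype.sum_bijective insF (insF_bijective n)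
    (fun p => h ((n - (p.1:ℕ)) + invCount p.2)) (fun π => h (invCount π))
    (fun ⟨i, σ⟩ => by
      show h ((n - (i:ℕ)) + invCount σ) = h (invCount (insF (i, σ)))
      rw [invCount_insF i σ])]
  rw [Fintype.sum_prod_type]
  rw [Fin.sum_univ_eq_sum_range (fun j => ∑ σ : Perm (Fin n), h ((n - j) + invCount σ)) (n+1)]
  rw [← Finset.sum_range_reflect (fun j => ∑ σ : Perm (Fin n), h (j + invCount σ)) (n+1)]
  refine Finset.sum_congr rfl fun j hj => ?_
  simp only [Nat.add_sub_cancel]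

noncomputable def mreal (n r : ℕ) : ℝ := ∑ π : Perm (Fin n), ((invCount π : ℝ))^r

lemma psum1 (m : ℕ) : ∑ j ∈ Finset.range m, (j:ℝ) = m*(m-1)/2 := by
  induction m with
  | zero => simp
  | succ k ih => rw [Finset.sum_range_succ, ih]; push_cast; ring
lemma psum2 (m : ℕ) : ∑ j ∈ Finset.range m, (j:ℝ)^2 = m*(m-1)*(2*m-1)/6 := by
  induction m with
  | zero => simp
  | succ k ih => rw [Finset.sum_range_succ, ih]; push_cast; ring
lemma psum3 (m : ℕ) : ∑ j ∈ Finset.range m, (j:ℝ)^3 = (m:ℝ)^2*((m:ℝ)-1)^2/4 := by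
  induction m with
  | zero => simp
  | succ k ih => rw [Finset.sum_range_succ, ih]; push_cast; ring
lemma psum4 (m : ℕ) : ∑ j ∈ Finset.range m, (j:ℝ)^4
    = m*(m-1)*(2*m-1)*(3*(m:ℝ)^2-3*m-1)/30 := by
  induction m with
  | zero => simp
  | succ k ih => rw [Finset.sum_range_succ, ih]; push_cast; ring

lemma inner4 (n : ℕ) (x : ℝ) : ∑ σ : Perm (Fin n), (x + (invCount σ:ℝ))^4
    = mreal n 4 + (4*mreal n 3)*x + (6*mreal n 2)*x^2 + (4*mreal n 1)*x^3
      + (mreal n 0)*x^4 := by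
  simp only [mreal, Finset.mul_sum, Finset.sum_mul, ← Finset.sum_add_distrib]
  refine Finset.sum_congr rfl fun σ _ => by ring
lemma inner3 (n : ℕ) (x : ℝ) : ∑ σ : Perm (Fin n), (x + (invCount σ:ℝ))^3
    = mreal n 3 + (3*mreal n 2)*x + (3*mreal n 1)*x^2 + (mreal n 0)*x^3 := by
  simp only [mreal, Finset.mul_sum, Finset.sum_mul, ← Finset.sum_add_distrib]
  refine Finset.sum_congr rfl fun σ _ => by ring
lemma inner2 (n : ℕ) (x : ℝ) : ∑ σ : Perm (Fin n), (x + (invCount σ:ℝ))^2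
    = mreal n 2 + (2*mreal n 1)*x + (mreal n 0)*x^2 := by
  simp only [mreal, Finset.mul_sum, Finset.sum_mul, ← Finset.sum_add_distrib]
  refine Finset.sum_congr rfl fun σ _ => by ring
lemma inner1 (n : ℕ) (x : ℝ) : ∑ σ : Perm (Fin n), (x + (invCount σ:ℝ))^1
    = mreal n 1 + (mreal n 0)*x := by
  simp only [mreal, Finset.mul_sum, Finset.sum_mul, ← Finset.sum_add_distrib]
  refine Finset.sum_congr rfl fun σ _ => by ring

lemma moments (n : ℕ) :
    mreal n 0 = n.factorial
    ∧ mreal n 1 = n.factorial * ((n:ℝ)^2/4 - n/4)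
    ∧ mreal n 2 = n.factorial * ((n:ℝ)^4/16 - 7*(n:ℝ)^3/72 + 5*(n:ℝ)^2/48 - 5*n/72)
    ∧ mreal n 3 = n.factorial * ((n:ℝ)^6/64 - 5*(n:ℝ)^5/192 + 11*(n:ℝ)^4/192
        - 19*(n:ℝ)^3/192 + 5*(n:ℝ)^2/96)
    ∧ mreal n 4 = n.factorial * ((n:ℝ)^8/256 - (n:ℝ)^7/192 + 71*(n:ℝ)^6/3456
        - 103*(n:ℝ)^5/1800 + 2111*(n:ℝ)^4/34560 - 133*(n:ℝ)^3/2880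
        + 25*(n:ℝ)^2/1728 + 31*(n:ℝ)/3600) := by
  induction n with
  | zero =>
    have h0 : ∀ π : Perm (Fin 0), invCount π = 0 := fun π => by simp [invCount]
    refine ⟨?_, ?_, ?_, ?_, ?_⟩ <;> simp [mreal, h0]
  | succ n ih =>
    obtain ⟨ih0, ih1, ih2, ih3, ih4⟩ := ih
    have key : ∀ r : ℕ, mreal (n+1) r
        = ∑ j ∈ Finset.range (n+1), ∑ σ : Perm (Fin n), ((j:ℝ) + (invCount σ:ℝ))^r := by
      intro r
      rw [mreal, sum_perm_succ n (fun k => (k:ℝ)^r)]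
      refine Finset.sum_congr rfl fun j _ => Finset.sum_congr rfl fun σ _ => ?_
      push_cast; ring
    have hfact : ((n+1).factorial : ℝ) = (n+1) * n.factorial := by
      rw [Nat.factorial_succ]; push_cast; ring
    refine ⟨?_, ?_, ?_, ?_, ?_⟩
    · rw [key 0]
      simp only [pow_zero, Finset.sum_const, Finset.card_range, nsmul_eq_mul,
        Finset.card_univ, Fintype.card_perm, Fintype.card_fin]
      rw [hfact]; push_cast; ring
    · rw [key 1]
      simp only [inner1 n]
      simp only [Finset.sum_add_distrib, ← Finset.mul_sum, Finset.sum_const,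
        Finset.card_range, nsmul_eq_mul]
      rw [psum1, ih0, ih1, hfact]; push_cast; ring
    · rw [key 2]
      simp only [inner2 n]
      simp only [Finset.sum_add_distrib, ← Finset.mul_sum, Finset.sum_const,
        Finset.card_range, nsmul_eq_mul]
      rw [psum1, psum2, ih0, ih1, ih2, hfact]; push_cast; ring
    · rw [key 3]
      simp only [inner3 n]
      simp only [Finset.sum_add_distrib, ← Finset.mul_sum, Finset.sum_const,
        Finset.card_range, nsmul_eq_mul]
      rw [psum1, psum2, psum3, ih0, ih1, ih2, ih3, hfact]; push_cast; ring
    · rw [key 4]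
      simp only [inner4 n]
      simp only [Finset.sum_add_distrib, ← Finset.mul_sum, Finset.sum_const,
        Finset.card_range, nsmul_eq_mul]
      rw [psum1, psum2, psum3, psum4, ih0, ih1, ih2, ih3, ih4, hfact]; push_cast; ring

/-- Fourth null moment of Kendall's tau. -/
theorem stmt9 (n : ℕ) (hn : 2 ≤ n)
    (invp : Perm (Fin n) → ℕ)
    (hinv : ∀ π, invp π = (Finset.univ.filter
      (fun ij : Fin n × Fin n => ij.1 < ij.2 ∧ π ij.2 < π ij.1)).card)
    (τ : Perm (Fin n) → ℝ)
    (hτ : ∀ π, τ π = 1 - 4 * (invp π : ℝ) / ((n : ℝ) * ((n : ℝ) - 1)))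
    (M : ℕ → ℝ)
    (hM : ∀ r, M r = (1 / (n.factorial : ℝ)) * ∑ π : Perm (Fin n), (τ π) ^ r) :
    M 4 = 4 * (100 * (n : ℝ) ^ 4 + 328 * (n : ℝ) ^ 3 - 127 * (n : ℝ) ^ 2
        - 997 * (n : ℝ) - 372) /
      (675 * (n : ℝ) ^ 3 * ((n : ℝ) - 1) ^ 3) := by
  obtain ⟨m0, m1, m2, m3, m4⟩ := moments n
  have hinv' : ∀ π : Perm (Fin n), (invp π : ℝ) = (invCount π : ℝ) := by
    intro π; rw [hinv]; rfl
  set d : ℝ := (n : ℝ) * ((n : ℝ) - 1) with hd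
  have hn0 : (n : ℝ) ≠ 0 := by
    have : (2:ℝ) ≤ (n:ℝ) := by exact_mod_cast hn
    linarith
  have hn1 : (n : ℝ) - 1 ≠ 0 := by
    have : (2:ℝ) ≤ (n:ℝ) := by exact_mod_cast hn
    intro h; linarith
  have hdne : d ≠ 0 := mul_ne_zero hn0 hn1
  have hfne : ((n.factorial : ℝ)) ≠ 0 := by
    exact_mod_cast n.factorial_ne_zero
  have hsum : ∑ π : Perm (Fin n), (τ π) ^ 4
      = mreal n 0 + (-16/d) * mreal n 1 + (96/d^2) * mreal n 2
        + (-256/d^3) * mreal n 3 + (256/d^4) * mreal n 4 := by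
    simp only [mreal, Finset.mul_sum, ← Finset.sum_add_distrib]
    refine Finset.sum_congr rfl fun π _ => ?_
    rw [hτ, hinv' π]
    field_simp
    ring
  rw [hM 4, hsum, m0, m1, m2, m3, m4, hd]
  field_simp
  ring
end

section
/- For every integer n ≥ 2, the sixth null moment of Kendall's tau satisfies M_{τ,6}(n) = 8 P_{τ,6}(n) / (59535 n⁵ (n−1)⁵), where P_{τ,6}(n) = 9800n⁷ + 32732n⁶ − 42010n⁵ − 230695n⁴ − 72460n³ + 400733n² + 391500n + 118080. -/
open Finset Equiv

namespace Stmt10Aux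

def invc {m : ℕ} (π : Perm (Fin m)) : ℕ :=
  (Finset.univ.filter
    (fun ij : Fin m × Fin m => ij.1 < ij.2 ∧ π ij.2 < π ij.1)).card

def insFun {n : ℕ} (σ : Perm (Fin n)) (v : Fin (n + 1)) : Fin (n + 1) → Fin (n + 1) :=
  Fin.lastCases v (fun i => v.succAbove (σ i))

lemma insFun_castSucc {n : ℕ} (σ : Perm (Fin n)) (v : Fin (n + 1)) (i : Fin n) :
    insFun σ v i.castSucc = v.succAbove (σ i) := by
  simp [insFun]

lemma insFun_last {n : ℕ} (σ : Perm (Fin n)) (v : Fin (n + 1)) :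
    insFun σ v (Fin.last n) = v := by
  simp [insFun]

lemma insFun_inj {n : ℕ} (σ : Perm (Fin n)) (v : Fin (n + 1)) :
    Function.Injective (insFun σ v) := by
  intro a b h
  induction a using Fin.lastCases with
  | last =>
    induction b using Fin.lastCases with
    | last => rfl
    | cast j =>
      rw [insFun_last, insFun_castSucc] at h
      exact absurd h.symm (Fin.succAbove_ne v (σ j))
  | cast i =>
    induction b using Fin.lastCases with
    | last =>
      rw [insFun_last, insFun_castSucc] at h
      exact absurd h (Fin.succAbove_ne v (σ i))
    | cast j =>
      rw [insFun_castSucc, insFun_castSucc] at h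
      have := σ.injective (Fin.succAbove_right_injective h)
      rw [this]

noncomputable def ins {n : ℕ} (σ : Perm (Fin n)) (v : Fin (n + 1)) : Perm (Fin (n + 1)) :=
  Equiv.ofBijective (insFun σ v) (Finite.injective_iff_bijective.mp (insFun_inj σ v))

lemma ins_castSucc {n : ℕ} (σ : Perm (Fin n)) (v : Fin (n + 1)) (i : Fin n) :
    ins σ v i.castSucc = v.succAbove (σ i) := insFun_castSucc σ v i

lemma ins_last {n : ℕ} (σ : Perm (Fin n)) (v : Fin (n + 1)) :
    ins σ v (Fin.last n) = v := insFun_last σ v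

lemma ins_bijective (n : ℕ) :
    Function.Bijective (fun p : Perm (Fin n) × Fin (n + 1) => ins p.1 p.2) := by
  rw [Fintype.bijective_iff_injective_and_card]
  constructor
  · rintro ⟨σ, v⟩ ⟨σ', v'⟩ h
    simp only at h
    have hv : v = v' := by
      rw [← ins_last σ v, ← ins_last σ' v', h]
    have hσ : σ = σ' := by
      apply Equiv.ext
      intro i
      have h2 : ins σ v i.castSucc = ins σ' v' i.castSucc := by rw [h]
      rw [ins_castSucc, ins_castSucc, hv] at h2
      exact Fin.succAbove_right_injective h2
    rw [hv, hσ]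
  · simp [Fintype.card_perm, Nat.factorial_succ, mul_comm]

lemma range_count (N m : ℕ) :
    (∑ k ∈ Finset.range N, if m ≤ k then 1 else 0) = N - m := by
  induction N with
  | zero => simp
  | succ M ih =>
    rw [Finset.sum_range_succ, ih]
    by_cases h : m ≤ M
    · rw [if_pos h]; omega
    · rw [if_neg h]; omega

lemma count_ge (n : ℕ) (v : Fin (n + 1)) :
    (∑ i : Fin n, if v ≤ (i.castSucc) then 1 else 0) = n - v.val := by
  have h1 : ∀ i : Fin n, (if v ≤ i.castSucc then 1 else 0)
      = (fun k : ℕ => if v.val ≤ k then 1 else 0) i.val := by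
    intro i
    simp [Fin.le_def]
  rw [Finset.sum_congr rfl (fun i _ => h1 i),
    Fin.sum_univ_eq_sum_range (fun k : ℕ => if v.val ≤ k then 1 else 0) n,
    range_count]

lemma invc_ins {n : ℕ} (σ : Perm (Fin n)) (v : Fin (n + 1)) :
    invc (ins σ v) = invc σ + (n - v.val) := by
  have key : ∀ {m : ℕ} (π : Perm (Fin m)),
      invc π = ∑ i : Fin m, ∑ j : Fin m, if (i < j ∧ π j < π i) then 1 else 0 := by
    intro m π
    rw [invc, Finset.card_filter]
    rw [Fintype.sum_prod_type]
  rw [key, key]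
  rw [Fin.sum_univ_castSucc]
  have hlast : (∑ j : Fin (n+1), if (Fin.last n < j ∧ (ins σ v) j < (ins σ v) (Fin.last n))
      then 1 else 0) = 0 := by
    apply Finset.sum_eq_zero
    intro j _
    rw [if_neg]
    rintro ⟨hj, -⟩
    exact absurd hj (Fin.not_lt.mpr (Fin.le_last j))
  rw [hlast, add_zero]
  have hrow : ∀ i : Fin n,
      (∑ j : Fin (n+1), if (i.castSucc < j ∧ (ins σ v) j < (ins σ v) i.castSucc) then 1 else 0)
      = (∑ j : Fin n, if (i < j ∧ σ j < σ i) then 1 else 0)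
        + (if v ≤ (σ i).castSucc then 1 else 0) := by
    intro i
    rw [Fin.sum_univ_castSucc]
    congr 1
    · apply Finset.sum_congr rfl
      intro j _
      rw [ins_castSucc, ins_castSucc]
      simp only [Fin.castSucc_lt_castSucc_iff, Fin.succAbove_lt_succAbove_iff]
    · rw [ins_last, ins_castSucc]
      congr 1
      simp only [Fin.castSucc_lt_last i, true_and]
      exact propext (Fin.lt_succAbove_iff_le_castSucc v (σ i))
  rw [Finset.sum_congr rfl (fun i _ => hrow i), Finset.sum_add_distrib]
  congr 1
  have : (∑ i : Fin n, if v ≤ (σ i).castSucc then 1 else 0)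
      = ∑ i : Fin n, if v ≤ i.castSucc then 1 else 0 :=
    Equiv.sum_comp σ (fun i => if v ≤ i.castSucc then 1 else 0)
  rw [this, count_ge]

noncomputable def U (r m : ℕ) : ℝ := ∑ π : Perm (Fin m), ((invc π : ℝ)) ^ r

noncomputable def SS (k m : ℕ) : ℝ := ∑ j ∈ Finset.range (m + 1), (j : ℝ) ^ k

lemma Urec (r n : ℕ) :
    U r (n + 1) = ∑ k ∈ Finset.range (r + 1),
      U k n * (r.choose k : ℝ) * SS (r - k) n := by
  have hg := ins_bijective n
  set g := fun p : Perm (Fin n) × Fin (n + 1) => ins p.1 p.2 with hgdef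
  have hinv : ∀ σ v, invc (g (σ, v)) = invc σ + (n - v.val) := fun σ v => invc_ins σ v
  have h1 : U r (n + 1) = ∑ p : Perm (Fin n) × Fin (n + 1), ((invc (g p) : ℝ)) ^ r :=
    (Fintype.sum_bijective g hg _ _ (fun p => rfl)).symm
  rw [h1, Fintype.sum_prod_type]
  have h2 : ∀ σ : Perm (Fin n), ∀ v : Fin (n+1),
      ((invc (g (σ, v)) : ℝ)) ^ r = ((invc σ : ℝ) + ((n - v.val : ℕ) : ℝ)) ^ r := by
    intro σ v
    rw [hinv σ v]
    push_cast
    ring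
  calc ∑ σ : Perm (Fin n), ∑ v : Fin (n+1), ((invc (g (σ, v)) : ℝ)) ^ r
      = ∑ σ : Perm (Fin n), ∑ j ∈ Finset.range (n+1), ((invc σ : ℝ) + (j : ℝ)) ^ r := by
        apply Finset.sum_congr rfl
        intro σ _
        rw [Finset.sum_congr rfl (fun v _ => h2 σ v)]
        rw [Fin.sum_univ_eq_sum_range
          (fun v : ℕ => ((invc σ : ℝ) + ((n - v : ℕ) : ℝ)) ^ r) (n+1)]
        have := Finset.sum_range_reflect
          (fun j : ℕ => ((invc σ : ℝ) + ((j : ℕ) : ℝ)) ^ r) (n+1)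
        rw [← this]
        apply Finset.sum_congr rfl
        intro j hj
        simp only [Finset.mem_range] at hj
        have hje : n + 1 - 1 - j = n - j := by omega
        rw [hje]
    _ = ∑ σ : Perm (Fin n), ∑ j ∈ Finset.range (n+1), ∑ k ∈ Finset.range (r+1),
          (invc σ : ℝ) ^ k * (j:ℝ) ^ (r - k) * (r.choose k : ℝ) := by
        apply Finset.sum_congr rfl; intro σ _
        apply Finset.sum_congr rfl; intro j _
        exact add_pow _ _ r
    _ = ∑ σ : Perm (Fin n), ∑ k ∈ Finset.range (r+1),
          (invc σ : ℝ) ^ k * (r.choose k : ℝ) * SS (r - k) n := by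
        apply Finset.sum_congr rfl; intro σ _
        rw [Finset.sum_comm]
        apply Finset.sum_congr rfl; intro k _
        rw [SS, Finset.mul_sum]
        apply Finset.sum_congr rfl; intro j _
        ring
    _ = ∑ k ∈ Finset.range (r + 1), U k n * (r.choose k : ℝ) * SS (r - k) n := by
        rw [Finset.sum_comm]
        apply Finset.sum_congr rfl; intro k _
        rw [U, Finset.sum_mul, Finset.sum_mul]

lemma SS0 (m : ℕ) : SS 0 m = (m:ℝ) + 1 := by
  induction m with
  | zero => simp [SS]
  | succ p ih => rw [SS, Finset.sum_range_succ, ← SS, ih]; push_cast; ring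

lemma SS1 (m : ℕ) : SS 1 m = (m:ℝ) * ((m:ℝ)+1) / 2 := by
  induction m with
  | zero => simp [SS]
  | succ p ih => rw [SS, Finset.sum_range_succ, ← SS, ih]; push_cast; ring

lemma SS2 (m : ℕ) : SS 2 m = (m:ℝ) * ((m:ℝ)+1) * (2*(m:ℝ)+1) / 6 := by
  induction m with
  | zero => simp [SS]
  | succ p ih => rw [SS, Finset.sum_range_succ, ← SS, ih]; push_cast; ring

lemma SS3 (m : ℕ) : SS 3 m = (m:ℝ)^2 * ((m:ℝ)+1)^2 / 4 := by
  induction m with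
  | zero => simp [SS]
  | succ p ih => rw [SS, Finset.sum_range_succ, ← SS, ih]; push_cast; ring

lemma SS4 (m : ℕ) : SS 4 m = (m:ℝ) * ((m:ℝ)+1) * (2*(m:ℝ)+1) * (3*(m:ℝ)^2+3*(m:ℝ)-1) / 30 := by
  induction m with
  | zero => simp [SS]
  | succ p ih => rw [SS, Finset.sum_range_succ, ← SS, ih]; push_cast; ring

lemma SS5 (m : ℕ) : SS 5 m = (m:ℝ)^2 * ((m:ℝ)+1)^2 * (2*(m:ℝ)^2+2*(m:ℝ)-1) / 12 := by
  induction m with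
  | zero => simp [SS]
  | succ p ih => rw [SS, Finset.sum_range_succ, ← SS, ih]; push_cast; ring

lemma SS6 (m : ℕ) : SS 6 m = (m:ℝ) * ((m:ℝ)+1) * (2*(m:ℝ)+1) * (3*(m:ℝ)^4+6*(m:ℝ)^3-3*(m:ℝ)+1) / 42 := by
  induction m with
  | zero => simp [SS]
  | succ p ih => rw [SS, Finset.sum_range_succ, ← SS, ih]; push_cast; ring

noncomputable def q1 (x : ℝ) : ℝ := (-1/4 : ℝ) * x + (1/4 : ℝ) * x ^ 2

noncomputable def q2 (x : ℝ) : ℝ := (-5/72 : ℝ) * x + (5/48 : ℝ) * x ^ 2 + (-7/72 : ℝ) * x ^ 3 + (1/16 : ℝ) * x ^ 4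

noncomputable def q3 (x : ℝ) : ℝ := (5/96 : ℝ) * x ^ 2 + (-19/192 : ℝ) * x ^ 3 + (11/192 : ℝ) * x ^ 4 + (-5/192 : ℝ) * x ^ 5 + (1/64 : ℝ) * x ^ 6

noncomputable def q4 (x : ℝ) : ℝ := (31/3600 : ℝ) * x + (25/1728 : ℝ) * x ^ 2 + (-133/2880 : ℝ) * x ^ 3 + (2111/34560 : ℝ) * x ^ 4 + (-103/1800 : ℝ) * x ^ 5 + (71/3456 : ℝ) * x ^ 6 + (-1/192 : ℝ) * x ^ 7 + (1/256 : ℝ) * x ^ 8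

noncomputable def q5 (x : ℝ) : ℝ := (-31/2880 : ℝ) * x ^ 2 + (-253/34560 : ℝ) * x ^ 3 + (187/3456 : ℝ) * x ^ 4 + (-1439/27648 : ℝ) * x ^ 5 + (4543/138240 : ℝ) * x ^ 6 + (-1619/69120 : ℝ) * x ^ 7 + (85/13824 : ℝ) * x ^ 8 + (-5/9216 : ℝ) * x ^ 9 + (1/1024 : ℝ) * x ^ 10

noncomputable def q6 (x : ℝ) : ℝ := (-41/10584 : ℝ) * x + (-31/3456 : ℝ) * x ^ 2 + (6767/870912 : ℝ) * x ^ 3 + (1789/138240 : ℝ) * x ^ 4 + (-213733/5806080 : ℝ) * x ^ 5 + (41975/774144 : ℝ) * x ^ 6 + (-249163/8128512 : ℝ) * x ^ 7 + (6209/552960 : ℝ) * x ^ 8 + (-19963/2488320 : ℝ) * x ^ 9 + (65/36864 : ℝ) * x ^ 10 + (1/6144 : ℝ) * x ^ 11 + (1/4096 : ℝ) * x ^ 12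
lemma Uval (m : ℕ) : U 0 m = (m.factorial : ℝ) ∧ U 1 m = (m.factorial : ℝ) * q1 m ∧
    U 2 m = (m.factorial : ℝ) * q2 m ∧ U 3 m = (m.factorial : ℝ) * q3 m ∧
    U 4 m = (m.factorial : ℝ) * q4 m ∧ U 5 m = (m.factorial : ℝ) * q5 m ∧
    U 6 m = (m.factorial : ℝ) * q6 m := by
  induction m with
  | zero =>
    refine ⟨?_, ?_, ?_, ?_, ?_, ?_, ?_⟩ <;>
      norm_num [U, invc, q1, q2, q3, q4, q5, q6]
  | succ p ih =>
    obtain ⟨h0, h1, h2, h3, h4, h5, h6⟩ := ih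
    refine ⟨?_, ?_, ?_, ?_, ?_, ?_, ?_⟩
    · rw [Urec 0 p]
      simp only [Finset.sum_range_succ, Finset.sum_range_zero, zero_add, Nat.choose_self,
        Nat.cast_one, Nat.sub_self, mul_one]
      rw [SS0, h0, Nat.factorial_succ]
      push_cast
      ring
    · rw [Urec 1 p]
      simp only [Finset.sum_range_succ, Finset.sum_range_zero, zero_add,
        show Nat.choose 1 0 = 1 from rfl, show Nat.choose 1 1 = 1 from rfl, show 1 - 0 = 1 from rfl, show 1 - 1 = 0 from rfl]
      simp only [SS0, SS1, SS2, SS3, SS4, SS5, SS6]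
      simp only [h0, h1, q1, Nat.factorial_succ]
      push_cast
      ring
    · rw [Urec 2 p]
      simp only [Finset.sum_range_succ, Finset.sum_range_zero, zero_add,
        show Nat.choose 2 0 = 1 from rfl, show Nat.choose 2 1 = 2 from rfl, show Nat.choose 2 2 = 1 from rfl, show 2 - 0 = 2 from rfl, show 2 - 1 = 1 from rfl, show 2 - 2 = 0 from rfl]
      simp only [SS0, SS1, SS2, SS3, SS4, SS5, SS6]
      simp only [h0, h1, h2, q1, q2, Nat.factorial_succ]
      push_cast
      ring
    · rw [Urec 3 p]
      simp only [Finset.sum_range_succ, Finset.sum_range_zero, zero_add,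
        show Nat.choose 3 0 = 1 from rfl, show Nat.choose 3 1 = 3 from rfl, show Nat.choose 3 2 = 3 from rfl, show Nat.choose 3 3 = 1 from rfl, show 3 - 0 = 3 from rfl, show 3 - 1 = 2 from rfl, show 3 - 2 = 1 from rfl, show 3 - 3 = 0 from rfl]
      simp only [SS0, SS1, SS2, SS3, SS4, SS5, SS6]
      simp only [h0, h1, h2, h3, q1, q2, q3, Nat.factorial_succ]
      push_cast
      ring
    · rw [Urec 4 p]
      simp only [Finset.sum_range_succ, Finset.sum_range_zero, zero_add,
        show Nat.choose 4 0 = 1 from rfl, show Nat.choose 4 1 = 4 from rfl, show Nat.choose 4 2 = 6 from rfl, show Nat.choose 4 3 = 4 from rfl, show Nat.choose 4 4 = 1 from rfl, show 4 - 0 = 4 from rfl, show 4 - 1 = 3 from rfl, show 4 - 2 = 2 from rfl, show 4 - 3 = 1 from rfl, show 4 - 4 = 0 from rfl]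
      simp only [SS0, SS1, SS2, SS3, SS4, SS5, SS6]
      simp only [h0, h1, h2, h3, h4, q1, q2, q3, q4, Nat.factorial_succ]
      push_cast
      ring
    · rw [Urec 5 p]
      simp only [Finset.sum_range_succ, Finset.sum_range_zero, zero_add,
        show Nat.choose 5 0 = 1 from rfl, show Nat.choose 5 1 = 5 from rfl, show Nat.choose 5 2 = 10 from rfl, show Nat.choose 5 3 = 10 from rfl, show Nat.choose 5 4 = 5 from rfl, show Nat.choose 5 5 = 1 from rfl, show 5 - 0 = 5 from rfl, show 5 - 1 = 4 from rfl, show 5 - 2 = 3 from rfl, show 5 - 3 = 2 from rfl, show 5 - 4 = 1 from rfl, show 5 - 5 = 0 from rfl]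
      simp only [SS0, SS1, SS2, SS3, SS4, SS5, SS6]
      simp only [h0, h1, h2, h3, h4, h5, q1, q2, q3, q4, q5, Nat.factorial_succ]
      push_cast
      ring
    · rw [Urec 6 p]
      simp only [Finset.sum_range_succ, Finset.sum_range_zero, zero_add,
        show Nat.choose 6 0 = 1 from rfl, show Nat.choose 6 1 = 6 from rfl, show Nat.choose 6 2 = 15 from rfl, show Nat.choose 6 3 = 20 from rfl, show Nat.choose 6 4 = 15 from rfl, show Nat.choose 6 5 = 6 from rfl, show Nat.choose 6 6 = 1 from rfl, show 6 - 0 = 6 from rfl, show 6 - 1 = 5 from rfl, show 6 - 2 = 4 from rfl, show 6 - 3 = 3 from rfl, show 6 - 4 = 2 from rfl, show 6 - 5 = 1 from rfl, show 6 - 6 = 0 from rfl]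
      simp only [SS0, SS1, SS2, SS3, SS4, SS5, SS6]
      simp only [h0, h1, h2, h3, h4, h5, h6, q1, q2, q3, q4, q5, q6, Nat.factorial_succ]
      push_cast
      ring

lemma sum_pow6 (n : ℕ) (c : ℝ) (τ : Perm (Fin n) → ℝ)
    (h : ∀ π, τ π = 1 - c * (invc π : ℝ)) :
    ∑ π : Perm (Fin n), τ π ^ 6
      = U 0 n - 6*c*U 1 n + 15*c^2*U 2 n - 20*c^3*U 3 n
        + 15*c^4*U 4 n - 6*c^5*U 5 n + c^6*U 6 n := by
  have e1 : ∀ π : Perm (Fin n), τ π ^ 6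
      = ((invc π : ℝ))^0 - 6*c*((invc π : ℝ))^1 + 15*c^2*((invc π : ℝ))^2
        - 20*c^3*((invc π : ℝ))^3 + 15*c^4*((invc π : ℝ))^4
        - 6*c^5*((invc π : ℝ))^5 + c^6*((invc π : ℝ))^6 := by
    intro π; rw [h π]; ring
  rw [Finset.sum_congr rfl (fun π _ => e1 π), Finset.sum_add_distrib,
    Finset.sum_sub_distrib, Finset.sum_add_distrib, Finset.sum_sub_distrib,
    Finset.sum_add_distrib, Finset.sum_sub_distrib,
    ← Finset.mul_sum, ← Finset.mul_sum, ← Finset.mul_sum, ← Finset.mul_sum,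
    ← Finset.mul_sum, ← Finset.mul_sum]
  simp only [U]

end Stmt10Aux

set_option maxHeartbeats 2000000 in
open Stmt10Aux in
/-- Sixth null moment of Kendall's tau. -/
theorem stmt10 (n : ℕ) (hn : 2 ≤ n)
    (invp : Perm (Fin n) → ℕ)
    (hinv : ∀ π, invp π = (Finset.univ.filter
      (fun ij : Fin n × Fin n => ij.1 < ij.2 ∧ π ij.2 < π ij.1)).card)
    (τ : Perm (Fin n) → ℝ)
    (hτ : ∀ π, τ π = 1 - 4 * (invp π : ℝ) / ((n : ℝ) * ((n : ℝ) - 1)))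
    (M : ℕ → ℝ)
    (hM : ∀ r, M r = (1 / (n.factorial : ℝ)) * ∑ π : Perm (Fin n), (τ π) ^ r) :
    M 6 = 8 * (9800 * (n : ℝ) ^ 7 + 32732 * (n : ℝ) ^ 6 - 42010 * (n : ℝ) ^ 5
        - 230695 * (n : ℝ) ^ 4 - 72460 * (n : ℝ) ^ 3 + 400733 * (n : ℝ) ^ 2
        + 391500 * (n : ℝ) + 118080) /
      (59535 * (n : ℝ) ^ 5 * ((n : ℝ) - 1) ^ 5) := by
  have hn2 : (2:ℝ) ≤ (n:ℝ) := by exact_mod_cast hn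
  have hn0 : (n:ℝ) ≠ 0 := by linarith
  have hn1 : (n:ℝ) - 1 ≠ 0 := by intro h; nlinarith [h]
  have hfac : (n.factorial : ℝ) ≠ 0 := Nat.cast_ne_zero.mpr (Nat.factorial_ne_zero n)
  have hτ' : ∀ π : Perm (Fin n),
      τ π = 1 - (4 / ((n:ℝ) * ((n:ℝ) - 1))) * (invc π : ℝ) := by
    intro π
    rw [hτ π, hinv π]
    simp only [invc]
    ring
  rw [hM 6, sum_pow6 n (4 / ((n:ℝ) * ((n:ℝ) - 1))) τ hτ']
  obtain ⟨e0, e1, e2, e3, e4, e5, e6⟩ := Uval n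
  rw [e0, e1, e2, e3, e4, e5, e6]
  simp only [q1, q2, q3, q4, q5, q6]
  field_simp
  ring
end

section
/- For every integer n ≥ 2, the null variance of the fourth power of Kendall's tau satisfies M_{τ,8}(n) − M_{τ,4}(n)² = 256(n−2) Q_{τ,4}(n) / (9568125 n⁷ (n−1)⁷), where Q_{τ,4}(n) = 140000n⁹ + 617400n⁸ − 160764n⁷ − 4827762n⁶ − 7764663n⁵ + 3028185n⁴ + 23170684n³ + 31403277n² + 20222343n + 5273100. -/
open Finset Equiv

private def invC {m : ℕ} (π : Perm (Fin m)) : ℕ :=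
  (Finset.univ.filter (fun ij : Fin m × Fin m => ij.1 < ij.2 ∧ π ij.2 < π ij.1)).card

private noncomputable def Phi (n : ℕ) (x : Fin (n+1) × Perm (Fin n)) : Perm (Fin (n+1)) :=
  Equiv.Perm.decomposeFin.symm (0, x.2) * x.1.cycleRange

private lemma Phi_self (n : ℕ) (k : Fin (n+1)) (σ : Perm (Fin n)) : Phi n (k, σ) k = 0 := by
  simp [Phi, Equiv.Perm.mul_apply, Fin.cycleRange_self, Equiv.Perm.decomposeFin_symm_apply_zero]

private lemma Phi_succAbove (n : ℕ) (k : Fin (n+1)) (σ : Perm (Fin n)) (t : Fin n) :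
    Phi n (k, σ) (k.succAbove t) = (σ t).succ := by
  rcases lt_or_ge t.castSucc k with h | h
  · rw [Phi, Equiv.Perm.mul_apply, Fin.succAbove_of_castSucc_lt _ _ h, Fin.cycleRange_of_lt h,
      Fin.coeSucc_eq_succ, Equiv.Perm.decomposeFin_symm_apply_succ]
    simp [Equiv.swap_self]
  · rw [Phi, Equiv.Perm.mul_apply, Fin.succAbove_of_le_castSucc _ _ h,
      Fin.cycleRange_of_gt (Fin.le_castSucc_iff.mp h), Equiv.Perm.decomposeFin_symm_apply_succ]
    simp [Equiv.swap_self]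

private lemma invC_Phi (n : ℕ) (k : Fin (n+1)) (σ : Perm (Fin n)) :
    invC (Phi n (k, σ)) = k.val + invC σ := by
  classical
  set π := Phi n (k, σ) with hπ
  have hπk : π k = 0 := Phi_self n k σ
  have hπs : ∀ t, π (k.succAbove t) = (σ t).succ := Phi_succAbove n k σ
  have hpos : ∀ i : Fin (n+1), i ≠ k → 0 < π i := by
    intro i hi
    rw [Fin.pos_iff_ne_zero', ← hπk]
    exact fun h => hi (π.injective h)
  show (Finset.univ.filter
      (fun ij : Fin (n+1) × Fin (n+1) => ij.1 < ij.2 ∧ π ij.2 < π ij.1)).card = k.val + invC σ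
  rw [← Finset.card_filter_add_card_filter_not
    (p := fun ij : Fin (n+1) × Fin (n+1) => ij.2 = k)]
  congr 1
  · -- pairs (i, k) with i < k
    rw [show (k.val : ℕ) = (Finset.Iio k).card from (Fin.card_Iio k).symm]
    refine Finset.card_bij' (fun a _ => a.1) (fun b _ => (b, k)) ?_ ?_ ?_ ?_
    · intro a ha
      simp only [Finset.mem_filter, Finset.mem_univ, true_and] at ha
      simp only [Finset.mem_Iio]
      exact ha.2 ▸ ha.1.1
    · intro b hb
      have hb' : b < k := Finset.mem_Iio.mp hb
      exact Finset.mem_filter.mpr ⟨Finset.mem_filter.mpr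
        ⟨Finset.mem_univ _, hb', by rw [hπk]; exact hpos b hb'.ne⟩, rfl⟩
    · intro a ha
      simp only [Finset.mem_filter, Finset.mem_univ, true_and] at ha
      exact Prod.ext rfl ha.2.symm
    · intro b _
      rfl
  · -- pairs avoiding k
    rw [invC]
    symm
    refine Finset.card_bij (fun a _ => (k.succAbove a.1, k.succAbove a.2)) ?_ ?_ ?_
    · intro a ha
      simp only [Finset.mem_filter, Finset.mem_univ, true_and] at ha ⊢
      refine ⟨⟨Fin.succAbove_lt_succAbove_iff.mpr ha.1, ?_⟩, Fin.succAbove_ne k a.2⟩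
      rw [hπs, hπs, Fin.succ_lt_succ_iff]
      exact ha.2
    · intro a ha b hb hab
      have h1 := congrArg Prod.fst hab
      have h2 := congrArg Prod.snd hab
      simp only at h1 h2
      exact Prod.ext (Fin.succAbove_right_injective h1) (Fin.succAbove_right_injective h2)
    · intro b hb
      simp only [Finset.mem_filter, Finset.mem_univ, true_and] at hb
      obtain ⟨⟨hlt, hval⟩, hb2⟩ := hb
      have hb1 : b.1 ≠ k := by
        intro h
        rw [h, hπk] at hval
        exact absurd hval (Fin.not_lt_zero _)
      obtain ⟨t, ht⟩ := Fin.exists_succAbove_eq hb1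
      obtain ⟨u, hu⟩ := Fin.exists_succAbove_eq hb2
      refine ⟨(t, u), ?_, show (k.succAbove t, k.succAbove u) = b from Prod.ext ht hu⟩
      simp only [Finset.mem_filter, Finset.mem_univ, true_and]
      constructor
      · rw [← Fin.succAbove_lt_succAbove_iff (p := k), ht, hu]
        exact hlt
      · rw [← Fin.succ_lt_succ_iff, ← hπs, ← hπs, ht, hu]
        exact hval

private lemma Phi_bij (n : ℕ) : Function.Bijective (Phi n) := by
  rw [Fintype.bijective_iff_injective_and_card]
  constructor
  · rintro ⟨k, σ⟩ ⟨k', σ'⟩ h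
    have hk : k = k' := by
      have h1 : Phi n (k', σ') k = 0 := by rw [← h]; exact Phi_self n k σ
      have h2 : Phi n (k', σ') k' = 0 := Phi_self n k' σ'
      exact (Phi n (k', σ')).injective (h1.trans h2.symm)
    subst hk
    have h2 : Equiv.Perm.decomposeFin.symm (0, σ) = Equiv.Perm.decomposeFin.symm (0, σ') :=
      mul_right_cancel h
    have h3 : ((0 : Fin (n+1)), σ) = ((0 : Fin (n+1)), σ') :=
      Equiv.Perm.decomposeFin.symm.injective h2
    exact Prod.ext rfl (by simpa using h3)
  · simp [Fintype.card_perm, Nat.factorial_succ]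

private lemma sum_key (n : ℕ) (f : ℕ → ℝ) :
    ∑ π : Perm (Fin (n+1)), f (invC π)
      = ∑ k : Fin (n+1), ∑ σ : Perm (Fin n), f (k.val + invC σ) := by
  rw [← Function.Bijective.sum_comp (Phi_bij n) (fun π => f (invC π)), Fintype.sum_prod_type]
  exact Finset.sum_congr rfl fun k _ => Finset.sum_congr rfl fun σ _ => by rw [invC_Phi]

private noncomputable def P1 (x : ℝ) : ℝ := (-1/4) * x^1 + (1/4) * x^2
private noncomputable def P2 (x : ℝ) : ℝ := (-5/72) * x^1 + (5/48) * x^2 + (-7/72) * x^3 + (1/16) * x^4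
private noncomputable def P3 (x : ℝ) : ℝ := (5/96) * x^2 + (-19/192) * x^3 + (11/192) * x^4 + (-5/192) * x^5 + (1/64) * x^6
private noncomputable def P4 (x : ℝ) : ℝ := (31/3600) * x^1 + (25/1728) * x^2 + (-133/2880) * x^3 + (2111/34560) * x^4 + (-103/1800) * x^5 + (71/3456) * x^6 + (-1/192) * x^7 + (1/256) * x^8
private noncomputable def P5 (x : ℝ) : ℝ := (-31/2880) * x^2 + (-253/34560) * x^3 + (187/3456) * x^4 + (-1439/27648) * x^5 + (4543/138240) * x^6 + (-1619/69120) * x^7 + (85/13824) * x^8 + (-5/9216) * x^9 + (1/1024) * x^10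
private noncomputable def P6 (x : ℝ) : ℝ := (-41/10584) * x^1 + (-31/3456) * x^2 + (6767/870912) * x^3 + (1789/138240) * x^4 + (-213733/5806080) * x^5 + (41975/774144) * x^6 + (-249163/8128512) * x^7 + (6209/552960) * x^8 + (-19963/2488320) * x^9 + (65/36864) * x^10 + (1/6144) * x^11 + (1/4096) * x^12
private noncomputable def P7 (x : ℝ) : ℝ := (41/6048) * x^2 + (863/96768) * x^3 + (-49459/2488320) * x^4 + (-106903/4976640) * x^5 + (26627/663552) * x^6 + (-228437/6635520) * x^7 + (1514983/46448640) * x^8 + (-611647/46448640) * x^9 + (8911/3981312) * x^10 + (-49469/19906560) * x^11 + (245/442368) * x^12 + (7/49152) * x^13 + (1/16384) * x^14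
private noncomputable def P8 (x : ℝ) : ℝ := (31/7200) * x^1 + (551267/54432000) * x^2 + (-15257/4354560) * x^3 + (-3037501/223948800) * x^4 + (1644767/130636800) * x^5 + (14936119/2239488000) * x^6 + (-458203/9953280) * x^7 + (312314839/8360755200) * x^8 + (-3017603/174182400) * x^9 + (66986981/4478976000) * x^10 + (-129067/26127360) * x^11 + (-75187/358318080) * x^12 + (-3563/4976640) * x^13 + (91/442368) * x^14 + (5/73728) * x^15 + (1/65536) * x^16

private lemma fa0 (n : ℕ) : ∑ j : Fin (n+1), ((j.val : ℝ))^0 = (1) + (1) * (n:ℝ)^1 := by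
  induction n with
  | zero => norm_num
  | succ m ih =>
    rw [Fin.sum_univ_castSucc]
    simp only [Fin.coe_castSucc, Fin.val_last]
    rw [ih]
    push_cast
    ring

private lemma fa1 (n : ℕ) : ∑ j : Fin (n+1), ((j.val : ℝ))^1 = (1/2) * (n:ℝ)^1 + (1/2) * (n:ℝ)^2 := by
  induction n with
  | zero => norm_num
  | succ m ih =>
    rw [Fin.sum_univ_castSucc]
    simp only [Fin.coe_castSucc, Fin.val_last]
    rw [ih]
    push_cast
    ring

private lemma fa2 (n : ℕ) : ∑ j : Fin (n+1), ((j.val : ℝ))^2 = (1/6) * (n:ℝ)^1 + (1/2) * (n:ℝ)^2 + (1/3) * (n:ℝ)^3 := by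
  induction n with
  | zero => norm_num
  | succ m ih =>
    rw [Fin.sum_univ_castSucc]
    simp only [Fin.coe_castSucc, Fin.val_last]
    rw [ih]
    push_cast
    ring

private lemma fa3 (n : ℕ) : ∑ j : Fin (n+1), ((j.val : ℝ))^3 = (1/4) * (n:ℝ)^2 + (1/2) * (n:ℝ)^3 + (1/4) * (n:ℝ)^4 := by
  induction n with
  | zero => norm_num
  | succ m ih =>
    rw [Fin.sum_univ_castSucc]
    simp only [Fin.coe_castSucc, Fin.val_last]
    rw [ih]
    push_cast
    ring

private lemma fa4 (n : ℕ) : ∑ j : Fin (n+1), ((j.val : ℝ))^4 = (-1/30) * (n:ℝ)^1 + (1/3) * (n:ℝ)^3 + (1/2) * (n:ℝ)^4 + (1/5) * (n:ℝ)^5 := by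
  induction n with
  | zero => norm_num
  | succ m ih =>
    rw [Fin.sum_univ_castSucc]
    simp only [Fin.coe_castSucc, Fin.val_last]
    rw [ih]
    push_cast
    ring

private lemma fa5 (n : ℕ) : ∑ j : Fin (n+1), ((j.val : ℝ))^5 = (-1/12) * (n:ℝ)^2 + (5/12) * (n:ℝ)^4 + (1/2) * (n:ℝ)^5 + (1/6) * (n:ℝ)^6 := by
  induction n with
  | zero => norm_num
  | succ m ih =>
    rw [Fin.sum_univ_castSucc]
    simp only [Fin.coe_castSucc, Fin.val_last]
    rw [ih]
    push_cast
    ring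

private lemma fa6 (n : ℕ) : ∑ j : Fin (n+1), ((j.val : ℝ))^6 = (1/42) * (n:ℝ)^1 + (-1/6) * (n:ℝ)^3 + (1/2) * (n:ℝ)^5 + (1/2) * (n:ℝ)^6 + (1/7) * (n:ℝ)^7 := by
  induction n with
  | zero => norm_num
  | succ m ih =>
    rw [Fin.sum_univ_castSucc]
    simp only [Fin.coe_castSucc, Fin.val_last]
    rw [ih]
    push_cast
    ring

private lemma fa7 (n : ℕ) : ∑ j : Fin (n+1), ((j.val : ℝ))^7 = (1/12) * (n:ℝ)^2 + (-7/24) * (n:ℝ)^4 + (7/12) * (n:ℝ)^6 + (1/2) * (n:ℝ)^7 + (1/8) * (n:ℝ)^8 := by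
  induction n with
  | zero => norm_num
  | succ m ih =>
    rw [Fin.sum_univ_castSucc]
    simp only [Fin.coe_castSucc, Fin.val_last]
    rw [ih]
    push_cast
    ring

private lemma fa8 (n : ℕ) : ∑ j : Fin (n+1), ((j.val : ℝ))^8 = (-1/30) * (n:ℝ)^1 + (2/9) * (n:ℝ)^3 + (-7/15) * (n:ℝ)^5 + (2/3) * (n:ℝ)^7 + (1/2) * (n:ℝ)^8 + (1/9) * (n:ℝ)^9 := by
  induction n with
  | zero => norm_num
  | succ m ih =>
    rw [Fin.sum_univ_castSucc]
    simp only [Fin.coe_castSucc, Fin.val_last]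
    rw [ih]
    push_cast
    ring

private lemma ex1 (n : ℕ) (x : ℝ) : ∑ j : Fin (n+1), ((j.val : ℝ) + x)^1 = ((1/2) * (n:ℝ)^1 + (1/2) * (n:ℝ)^2) * x^0 + ((1) + (1) * (n:ℝ)^1) * x^1 := by
  calc ∑ j : Fin (n+1), ((j.val : ℝ) + x)^1
      = ∑ j : Fin (n+1), (((j.val:ℝ))^1 * (1 * x^0) + ((j.val:ℝ))^0 * (1 * x^1)) := Finset.sum_congr rfl fun j _ => by ring
    _ = (∑ j : Fin (n+1), ((j.val:ℝ))^1) * (1 * x^0) + (∑ j : Fin (n+1), ((j.val:ℝ))^0) * (1 * x^1) := by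
        simp only [Finset.sum_add_distrib, ← Finset.sum_mul]
    _ = _ := by rw [fa1 n, fa0 n]; ring

private lemma ex2 (n : ℕ) (x : ℝ) : ∑ j : Fin (n+1), ((j.val : ℝ) + x)^2 = ((1/6) * (n:ℝ)^1 + (1/2) * (n:ℝ)^2 + (1/3) * (n:ℝ)^3) * x^0 + ((1) * (n:ℝ)^1 + (1) * (n:ℝ)^2) * x^1 + ((1) + (1) * (n:ℝ)^1) * x^2 := by
  calc ∑ j : Fin (n+1), ((j.val : ℝ) + x)^2
      = ∑ j : Fin (n+1), (((j.val:ℝ))^2 * (1 * x^0) + ((j.val:ℝ))^1 * (2 * x^1) + ((j.val:ℝ))^0 * (1 * x^2)) := Finset.sum_congr rfl fun j _ => by ring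
    _ = (∑ j : Fin (n+1), ((j.val:ℝ))^2) * (1 * x^0) + (∑ j : Fin (n+1), ((j.val:ℝ))^1) * (2 * x^1) + (∑ j : Fin (n+1), ((j.val:ℝ))^0) * (1 * x^2) := by
        simp only [Finset.sum_add_distrib, ← Finset.sum_mul]
    _ = _ := by rw [fa2 n, fa1 n, fa0 n]; ring

private lemma ex3 (n : ℕ) (x : ℝ) : ∑ j : Fin (n+1), ((j.val : ℝ) + x)^3 = ((1/4) * (n:ℝ)^2 + (1/2) * (n:ℝ)^3 + (1/4) * (n:ℝ)^4) * x^0 + ((1/2) * (n:ℝ)^1 + (3/2) * (n:ℝ)^2 + (1) * (n:ℝ)^3) * x^1 + ((3/2) * (n:ℝ)^1 + (3/2) * (n:ℝ)^2) * x^2 + ((1) + (1) * (n:ℝ)^1) * x^3 := by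
  calc ∑ j : Fin (n+1), ((j.val : ℝ) + x)^3
      = ∑ j : Fin (n+1), (((j.val:ℝ))^3 * (1 * x^0) + ((j.val:ℝ))^2 * (3 * x^1) + ((j.val:ℝ))^1 * (3 * x^2) + ((j.val:ℝ))^0 * (1 * x^3)) := Finset.sum_congr rfl fun j _ => by ring
    _ = (∑ j : Fin (n+1), ((j.val:ℝ))^3) * (1 * x^0) + (∑ j : Fin (n+1), ((j.val:ℝ))^2) * (3 * x^1) + (∑ j : Fin (n+1), ((j.val:ℝ))^1) * (3 * x^2) + (∑ j : Fin (n+1), ((j.val:ℝ))^0) * (1 * x^3) := by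
        simp only [Finset.sum_add_distrib, ← Finset.sum_mul]
    _ = _ := by rw [fa3 n, fa2 n, fa1 n, fa0 n]; ring

private lemma ex4 (n : ℕ) (x : ℝ) : ∑ j : Fin (n+1), ((j.val : ℝ) + x)^4 = ((-1/30) * (n:ℝ)^1 + (1/3) * (n:ℝ)^3 + (1/2) * (n:ℝ)^4 + (1/5) * (n:ℝ)^5) * x^0 + ((1) * (n:ℝ)^2 + (2) * (n:ℝ)^3 + (1) * (n:ℝ)^4) * x^1 + ((1) * (n:ℝ)^1 + (3) * (n:ℝ)^2 + (2) * (n:ℝ)^3) * x^2 + ((2) * (n:ℝ)^1 + (2) * (n:ℝ)^2) * x^3 + ((1) + (1) * (n:ℝ)^1) * x^4 := by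
  calc ∑ j : Fin (n+1), ((j.val : ℝ) + x)^4
      = ∑ j : Fin (n+1), (((j.val:ℝ))^4 * (1 * x^0) + ((j.val:ℝ))^3 * (4 * x^1) + ((j.val:ℝ))^2 * (6 * x^2) + ((j.val:ℝ))^1 * (4 * x^3) + ((j.val:ℝ))^0 * (1 * x^4)) := Finset.sum_congr rfl fun j _ => by ring
    _ = (∑ j : Fin (n+1), ((j.val:ℝ))^4) * (1 * x^0) + (∑ j : Fin (n+1), ((j.val:ℝ))^3) * (4 * x^1) + (∑ j : Fin (n+1), ((j.val:ℝ))^2) * (6 * x^2) + (∑ j : Fin (n+1), ((j.val:ℝ))^1) * (4 * x^3) + (∑ j : Fin (n+1), ((j.val:ℝ))^0) * (1 * x^4) := by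
        simp only [Finset.sum_add_distrib, ← Finset.sum_mul]
    _ = _ := by rw [fa4 n, fa3 n, fa2 n, fa1 n, fa0 n]; ring

private lemma ex5 (n : ℕ) (x : ℝ) : ∑ j : Fin (n+1), ((j.val : ℝ) + x)^5 = ((-1/12) * (n:ℝ)^2 + (5/12) * (n:ℝ)^4 + (1/2) * (n:ℝ)^5 + (1/6) * (n:ℝ)^6) * x^0 + ((-1/6) * (n:ℝ)^1 + (5/3) * (n:ℝ)^3 + (5/2) * (n:ℝ)^4 + (1) * (n:ℝ)^5) * x^1 + ((5/2) * (n:ℝ)^2 + (5) * (n:ℝ)^3 + (5/2) * (n:ℝ)^4) * x^2 + ((5/3) * (n:ℝ)^1 + (5) * (n:ℝ)^2 + (10/3) * (n:ℝ)^3) * x^3 + ((5/2) * (n:ℝ)^1 + (5/2) * (n:ℝ)^2) * x^4 + ((1) + (1) * (n:ℝ)^1) * x^5 := by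
  calc ∑ j : Fin (n+1), ((j.val : ℝ) + x)^5
      = ∑ j : Fin (n+1), (((j.val:ℝ))^5 * (1 * x^0) + ((j.val:ℝ))^4 * (5 * x^1) + ((j.val:ℝ))^3 * (10 * x^2) + ((j.val:ℝ))^2 * (10 * x^3) + ((j.val:ℝ))^1 * (5 * x^4) + ((j.val:ℝ))^0 * (1 * x^5)) := Finset.sum_congr rfl fun j _ => by ring
    _ = (∑ j : Fin (n+1), ((j.val:ℝ))^5) * (1 * x^0) + (∑ j : Fin (n+1), ((j.val:ℝ))^4) * (5 * x^1) + (∑ j : Fin (n+1), ((j.val:ℝ))^3) * (10 * x^2) + (∑ j : Fin (n+1), ((j.val:ℝ))^2) * (10 * x^3) + (∑ j : Fin (n+1), ((j.val:ℝ))^1) * (5 * x^4) + (∑ j : Fin (n+1), ((j.val:ℝ))^0) * (1 * x^5) := by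
        simp only [Finset.sum_add_distrib, ← Finset.sum_mul]
    _ = _ := by rw [fa5 n, fa4 n, fa3 n, fa2 n, fa1 n, fa0 n]; ring

private lemma ex6 (n : ℕ) (x : ℝ) : ∑ j : Fin (n+1), ((j.val : ℝ) + x)^6 = ((1/42) * (n:ℝ)^1 + (-1/6) * (n:ℝ)^3 + (1/2) * (n:ℝ)^5 + (1/2) * (n:ℝ)^6 + (1/7) * (n:ℝ)^7) * x^0 + ((-1/2) * (n:ℝ)^2 + (5/2) * (n:ℝ)^4 + (3) * (n:ℝ)^5 + (1) * (n:ℝ)^6) * x^1 + ((-1/2) * (n:ℝ)^1 + (5) * (n:ℝ)^3 + (15/2) * (n:ℝ)^4 + (3) * (n:ℝ)^5) * x^2 + ((5) * (n:ℝ)^2 + (10) * (n:ℝ)^3 + (5) * (n:ℝ)^4) * x^3 + ((5/2) * (n:ℝ)^1 + (15/2) * (n:ℝ)^2 + (5) * (n:ℝ)^3) * x^4 + ((3) * (n:ℝ)^1 + (3) * (n:ℝ)^2) * x^5 + ((1) + (1) * (n:ℝ)^1) * x^6 := by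
  calc ∑ j : Fin (n+1), ((j.val : ℝ) + x)^6
      = ∑ j : Fin (n+1), (((j.val:ℝ))^6 * (1 * x^0) + ((j.val:ℝ))^5 * (6 * x^1) + ((j.val:ℝ))^4 * (15 * x^2) + ((j.val:ℝ))^3 * (20 * x^3) + ((j.val:ℝ))^2 * (15 * x^4) + ((j.val:ℝ))^1 * (6 * x^5) + ((j.val:ℝ))^0 * (1 * x^6)) := Finset.sum_congr rfl fun j _ => by ring
    _ = (∑ j : Fin (n+1), ((j.val:ℝ))^6) * (1 * x^0) + (∑ j : Fin (n+1), ((j.val:ℝ))^5) * (6 * x^1) + (∑ j : Fin (n+1), ((j.val:ℝ))^4) * (15 * x^2) + (∑ j : Fin (n+1), ((j.val:ℝ))^3) * (20 * x^3) + (∑ j : Fin (n+1), ((j.val:ℝ))^2) * (15 * x^4) + (∑ j : Fin (n+1), ((j.val:ℝ))^1) * (6 * x^5) + (∑ j : Fin (n+1), ((j.val:ℝ))^0) * (1 * x^6) := by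
        simp only [Finset.sum_add_distrib, ← Finset.sum_mul]
    _ = _ := by rw [fa6 n, fa5 n, fa4 n, fa3 n, fa2 n, fa1 n, fa0 n]; ring

private lemma ex7 (n : ℕ) (x : ℝ) : ∑ j : Fin (n+1), ((j.val : ℝ) + x)^7 = ((1/12) * (n:ℝ)^2 + (-7/24) * (n:ℝ)^4 + (7/12) * (n:ℝ)^6 + (1/2) * (n:ℝ)^7 + (1/8) * (n:ℝ)^8) * x^0 + ((1/6) * (n:ℝ)^1 + (-7/6) * (n:ℝ)^3 + (7/2) * (n:ℝ)^5 + (7/2) * (n:ℝ)^6 + (1) * (n:ℝ)^7) * x^1 + ((-7/4) * (n:ℝ)^2 + (35/4) * (n:ℝ)^4 + (21/2) * (n:ℝ)^5 + (7/2) * (n:ℝ)^6) * x^2 + ((-7/6) * (n:ℝ)^1 + (35/3) * (n:ℝ)^3 + (35/2) * (n:ℝ)^4 + (7) * (n:ℝ)^5) * x^3 + ((35/4) * (n:ℝ)^2 + (35/2) * (n:ℝ)^3 + (35/4) * (n:ℝ)^4) * x^4 + ((7/2) * (n:ℝ)^1 + (21/2) * (n:ℝ)^2 + (7) * (n:ℝ)^3)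 * x^5 + ((7/2) * (n:ℝ)^1 + (7/2) * (n:ℝ)^2) * x^6 + ((1) + (1) * (n:ℝ)^1) * x^7 := by
  calc ∑ j : Fin (n+1), ((j.val : ℝ) + x)^7
      = ∑ j : Fin (n+1), (((j.val:ℝ))^7 * (1 * x^0) + ((j.val:ℝ))^6 * (7 * x^1) + ((j.val:ℝ))^5 * (21 * x^2) + ((j.val:ℝ))^4 * (35 * x^3) + ((j.val:ℝ))^3 * (35 * x^4) + ((j.val:ℝ))^2 * (21 * x^5) + ((j.val:ℝ))^1 * (7 * x^6) + ((j.val:ℝ))^0 * (1 * x^7)) := Finset.sum_congr rfl fun j _ => by ring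
    _ = (∑ j : Fin (n+1), ((j.val:ℝ))^7) * (1 * x^0) + (∑ j : Fin (n+1), ((j.val:ℝ))^6) * (7 * x^1) + (∑ j : Fin (n+1), ((j.val:ℝ))^5) * (21 * x^2) + (∑ j : Fin (n+1), ((j.val:ℝ))^4) * (35 * x^3) + (∑ j : Fin (n+1), ((j.val:ℝ))^3) * (35 * x^4) + (∑ j : Fin (n+1), ((j.val:ℝ))^2) * (21 * x^5) + (∑ j : Fin (n+1), ((j.val:ℝ))^1) * (7 * x^6) + (∑ j : Fin (n+1), ((j.val:ℝ))^0) * (1 * x^7) := by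
        simp only [Finset.sum_add_distrib, ← Finset.sum_mul]
    _ = _ := by rw [fa7 n, fa6 n, fa5 n, fa4 n, fa3 n, fa2 n, fa1 n, fa0 n]; ring

private lemma ex8 (n : ℕ) (x : ℝ) : ∑ j : Fin (n+1), ((j.val : ℝ) + x)^8 = ((-1/30) * (n:ℝ)^1 + (2/9) * (n:ℝ)^3 + (-7/15) * (n:ℝ)^5 + (2/3) * (n:ℝ)^7 + (1/2) * (n:ℝ)^8 + (1/9) * (n:ℝ)^9) * x^0 + ((2/3) * (n:ℝ)^2 + (-7/3) * (n:ℝ)^4 + (14/3) * (n:ℝ)^6 + (4) * (n:ℝ)^7 + (1) * (n:ℝ)^8) * x^1 + ((2/3) * (n:ℝ)^1 + (-14/3) * (n:ℝ)^3 + (14) * (n:ℝ)^5 + (14) * (n:ℝ)^6 + (4) * (n:ℝ)^7) * x^2 + ((-14/3) * (n:ℝ)^2 + (70/3) * (n:ℝ)^4 + (28) * (n:ℝ)^5 + (28/3) * (n:ℝ)^6) * x^3 + ((-7/3) * (n:ℝ)^1 + (70/3) * (n:ℝ)^3 + (35) * (n:ℝ)^4 + (14) * (n:ℝ)^5) * x^4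 + ((14) * (n:ℝ)^2 + (28) * (n:ℝ)^3 + (14) * (n:ℝ)^4) * x^5 + ((14/3) * (n:ℝ)^1 + (14) * (n:ℝ)^2 + (28/3) * (n:ℝ)^3) * x^6 + ((4) * (n:ℝ)^1 + (4) * (n:ℝ)^2) * x^7 + ((1) + (1) * (n:ℝ)^1) * x^8 := by
  calc ∑ j : Fin (n+1), ((j.val : ℝ) + x)^8
      = ∑ j : Fin (n+1), (((j.val:ℝ))^8 * (1 * x^0) + ((j.val:ℝ))^7 * (8 * x^1) + ((j.val:ℝ))^6 * (28 * x^2) + ((j.val:ℝ))^5 * (56 * x^3) + ((j.val:ℝ))^4 * (70 * x^4) + ((j.val:ℝ))^3 * (56 * x^5) + ((j.val:ℝ))^2 * (28 * x^6) + ((j.val:ℝ))^1 * (8 * x^7) + ((j.val:ℝ))^0 * (1 * x^8)) := Finset.sum_congr rfl fun j _ => by ring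
    _ = (∑ j : Fin (n+1), ((j.val:ℝ))^8) * (1 * x^0) + (∑ j : Fin (n+1), ((j.val:ℝ))^7) * (8 * x^1) + (∑ j : Fin (n+1), ((j.val:ℝ))^6) * (28 * x^2) + (∑ j : Fin (n+1), ((j.val:ℝ))^5) * (56 * x^3) + (∑ j : Fin (n+1), ((j.val:ℝ))^4) * (70 * x^4) + (∑ j : Fin (n+1), ((j.val:ℝ))^3) * (56 * x^5) + (∑ j : Fin (n+1), ((j.val:ℝ))^2) * (28 * x^6) + (∑ j : Fin (n+1), ((j.val:ℝ))^1) * (8 * x^7) + (∑ j : Fin (n+1), ((j.val:ℝ))^0) * (1 * x^8) := by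
        simp only [Finset.sum_add_distrib, ← Finset.sum_mul]
    _ = _ := by rw [fa8 n, fa7 n, fa6 n, fa5 n, fa4 n, fa3 n, fa2 n, fa1 n, fa0 n]; ring

private lemma moments_s11 (n : ℕ) :
    (∑ π : Perm (Fin n), ((invC π : ℝ))^1 = (n.factorial : ℝ) * P1 (n : ℝ)) ∧
    (∑ π : Perm (Fin n), ((invC π : ℝ))^2 = (n.factorial : ℝ) * P2 (n : ℝ)) ∧
    (∑ π : Perm (Fin n), ((invC π : ℝ))^3 = (n.factorial : ℝ) * P3 (n : ℝ)) ∧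
    (∑ π : Perm (Fin n), ((invC π : ℝ))^4 = (n.factorial : ℝ) * P4 (n : ℝ)) ∧
    (∑ π : Perm (Fin n), ((invC π : ℝ))^5 = (n.factorial : ℝ) * P5 (n : ℝ)) ∧
    (∑ π : Perm (Fin n), ((invC π : ℝ))^6 = (n.factorial : ℝ) * P6 (n : ℝ)) ∧
    (∑ π : Perm (Fin n), ((invC π : ℝ))^7 = (n.factorial : ℝ) * P7 (n : ℝ)) ∧
    (∑ π : Perm (Fin n), ((invC π : ℝ))^8 = (n.factorial : ℝ) * P8 (n : ℝ)) := by
  induction n with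
  | zero =>
    refine ⟨?_, ?_, ?_, ?_, ?_, ?_, ?_, ?_⟩ <;>
      simp [invC, P1, P2, P3, P4, P5, P6, P7, P8]
  | succ m ih =>
    obtain ⟨h1, h2, h3, h4, h5, h6, h7, h8⟩ := ih
    have h0 : ∑ σ : Perm (Fin m), ((invC σ : ℝ))^0 = (m.factorial : ℝ) := by
      simp [Finset.card_univ, Fintype.card_perm]
    refine ⟨?_, ?_, ?_, ?_, ?_, ?_, ?_, ?_⟩
    · have key : ∑ π : Perm (Fin (m+1)), ((invC π : ℝ))^1
          = ∑ σ : Perm (Fin m), ∑ k : Fin (m+1), ((k.val : ℝ) + ((invC σ : ℝ)))^1 := by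
        rw [sum_key m (fun a => ((a:ℝ))^1), Finset.sum_comm]
        exact Finset.sum_congr rfl fun σ _ => Finset.sum_congr rfl fun k _ => by push_cast; ring
      rw [key]
      simp only [ex1]
      simp only [Finset.sum_add_distrib, ← Finset.mul_sum]
      rw [h0, h1]
      rw [Nat.factorial_succ]
      push_cast
      simp only [P1, P2, P3, P4, P5, P6, P7, P8]
      ring
    · have key : ∑ π : Perm (Fin (m+1)), ((invC π : ℝ))^2
          = ∑ σ : Perm (Fin m), ∑ k : Fin (m+1), ((k.val : ℝ) + ((invC σ : ℝ)))^2 := by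
        rw [sum_key m (fun a => ((a:ℝ))^2), Finset.sum_comm]
        exact Finset.sum_congr rfl fun σ _ => Finset.sum_congr rfl fun k _ => by push_cast; ring
      rw [key]
      simp only [ex2]
      simp only [Finset.sum_add_distrib, ← Finset.mul_sum]
      rw [h0, h1, h2]
      rw [Nat.factorial_succ]
      push_cast
      simp only [P1, P2, P3, P4, P5, P6, P7, P8]
      ring
    · have key : ∑ π : Perm (Fin (m+1)), ((invC π : ℝ))^3
          = ∑ σ : Perm (Fin m), ∑ k : Fin (m+1), ((k.val : ℝ) + ((invC σ : ℝ)))^3 := by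
        rw [sum_key m (fun a => ((a:ℝ))^3), Finset.sum_comm]
        exact Finset.sum_congr rfl fun σ _ => Finset.sum_congr rfl fun k _ => by push_cast; ring
      rw [key]
      simp only [ex3]
      simp only [Finset.sum_add_distrib, ← Finset.mul_sum]
      rw [h0, h1, h2, h3]
      rw [Nat.factorial_succ]
      push_cast
      simp only [P1, P2, P3, P4, P5, P6, P7, P8]
      ring
    · have key : ∑ π : Perm (Fin (m+1)), ((invC π : ℝ))^4
          = ∑ σ : Perm (Fin m), ∑ k : Fin (m+1), ((k.val : ℝ) + ((invC σ : ℝ)))^4 := by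
        rw [sum_key m (fun a => ((a:ℝ))^4), Finset.sum_comm]
        exact Finset.sum_congr rfl fun σ _ => Finset.sum_congr rfl fun k _ => by push_cast; ring
      rw [key]
      simp only [ex4]
      simp only [Finset.sum_add_distrib, ← Finset.mul_sum]
      rw [h0, h1, h2, h3, h4]
      rw [Nat.factorial_succ]
      push_cast
      simp only [P1, P2, P3, P4, P5, P6, P7, P8]
      ring
    · have key : ∑ π : Perm (Fin (m+1)), ((invC π : ℝ))^5
          = ∑ σ : Perm (Fin m), ∑ k : Fin (m+1), ((k.val : ℝ) + ((invC σ : ℝ)))^5 := by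
        rw [sum_key m (fun a => ((a:ℝ))^5), Finset.sum_comm]
        exact Finset.sum_congr rfl fun σ _ => Finset.sum_congr rfl fun k _ => by push_cast; ring
      rw [key]
      simp only [ex5]
      simp only [Finset.sum_add_distrib, ← Finset.mul_sum]
      rw [h0, h1, h2, h3, h4, h5]
      rw [Nat.factorial_succ]
      push_cast
      simp only [P1, P2, P3, P4, P5, P6, P7, P8]
      ring
    · have key : ∑ π : Perm (Fin (m+1)), ((invC π : ℝ))^6
          = ∑ σ : Perm (Fin m), ∑ k : Fin (m+1), ((k.val : ℝ) + ((invC σ : ℝ)))^6 := by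
        rw [sum_key m (fun a => ((a:ℝ))^6), Finset.sum_comm]
        exact Finset.sum_congr rfl fun σ _ => Finset.sum_congr rfl fun k _ => by push_cast; ring
      rw [key]
      simp only [ex6]
      simp only [Finset.sum_add_distrib, ← Finset.mul_sum]
      rw [h0, h1, h2, h3, h4, h5, h6]
      rw [Nat.factorial_succ]
      push_cast
      simp only [P1, P2, P3, P4, P5, P6, P7, P8]
      ring
    · have key : ∑ π : Perm (Fin (m+1)), ((invC π : ℝ))^7
          = ∑ σ : Perm (Fin m), ∑ k : Fin (m+1), ((k.val : ℝ) + ((invC σ : ℝ)))^7 := by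
        rw [sum_key m (fun a => ((a:ℝ))^7), Finset.sum_comm]
        exact Finset.sum_congr rfl fun σ _ => Finset.sum_congr rfl fun k _ => by push_cast; ring
      rw [key]
      simp only [ex7]
      simp only [Finset.sum_add_distrib, ← Finset.mul_sum]
      rw [h0, h1, h2, h3, h4, h5, h6, h7]
      rw [Nat.factorial_succ]
      push_cast
      simp only [P1, P2, P3, P4, P5, P6, P7, P8]
      ring
    · have key : ∑ π : Perm (Fin (m+1)), ((invC π : ℝ))^8
          = ∑ σ : Perm (Fin m), ∑ k : Fin (m+1), ((k.val : ℝ) + ((invC σ : ℝ)))^8 := by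
        rw [sum_key m (fun a => ((a:ℝ))^8), Finset.sum_comm]
        exact Finset.sum_congr rfl fun σ _ => Finset.sum_congr rfl fun k _ => by push_cast; ring
      rw [key]
      simp only [ex8]
      simp only [Finset.sum_add_distrib, ← Finset.mul_sum]
      rw [h0, h1, h2, h3, h4, h5, h6, h7, h8]
      rw [Nat.factorial_succ]
      push_cast
      simp only [P1, P2, P3, P4, P5, P6, P7, P8]
      ring

set_option maxHeartbeats 4000000 in
/-- Null variance of the fourth power of Kendall's tau. -/
theorem stmt11 (n : ℕ) (hn : 2 ≤ n)
    (invp : Perm (Fin n) → ℕ)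
    (hinv : ∀ π, invp π = (Finset.univ.filter
      (fun ij : Fin n × Fin n => ij.1 < ij.2 ∧ π ij.2 < π ij.1)).card)
    (τ : Perm (Fin n) → ℝ)
    (hτ : ∀ π, τ π = 1 - 4 * (invp π : ℝ) / ((n : ℝ) * ((n : ℝ) - 1)))
    (M : ℕ → ℝ)
    (hM : ∀ r, M r = (1 / (n.factorial : ℝ)) * ∑ π : Perm (Fin n), (τ π) ^ r) :
    M 8 - (M 4) ^ 2 = 256 * ((n : ℝ) - 2) *
        (140000 * (n : ℝ) ^ 9 + 617400 * (n : ℝ) ^ 8 - 160764 * (n : ℝ) ^ 7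
          - 4827762 * (n : ℝ) ^ 6 - 7764663 * (n : ℝ) ^ 5 + 3028185 * (n : ℝ) ^ 4
          + 23170684 * (n : ℝ) ^ 3 + 31403277 * (n : ℝ) ^ 2 + 20222343 * (n : ℝ)
          + 5273100) /
      (9568125 * (n : ℝ) ^ 7 * ((n : ℝ) - 1) ^ 7) := by
  have hy2 : (2:ℝ) ≤ (n:ℝ) := by exact_mod_cast hn
  have hy : (n:ℝ) ≠ 0 := by linarith
  have hy1 : (n:ℝ) - 1 ≠ 0 := by linarith
  have hfact : (n.factorial : ℝ) ≠ 0 := Nat.cast_ne_zero.mpr n.factorial_ne_zero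
  have hτ' : ∀ π : Perm (Fin n), τ π = 1 - 4 * (invC π : ℝ) / ((n:ℝ) * ((n:ℝ) - 1)) := by
    intro π
    rw [hτ π, hinv π]
    rfl
  obtain ⟨h1, h2, h3, h4, h5, h6, h7, h8⟩ := moments_s11 n
  have h0 : ∑ π : Perm (Fin n), ((invC π : ℝ))^0 = (n.factorial : ℝ) := by
    simp [Finset.card_univ, Fintype.card_perm]
  have hpt4 : ∀ π : Perm (Fin n), τ π ^ 4 = ((invC π : ℝ))^0 * (1) + ((invC π : ℝ))^1 * ((-16) / ((n:ℝ) * ((n:ℝ) - 1))^1) + ((invC π : ℝ))^2 * ((96) / ((n:ℝ) * ((n:ℝ) - 1))^2) + ((invC π : ℝ))^3 * ((-256) / ((n:ℝ) * ((n:ℝ) - 1))^3) + ((invC π : ℝ))^4 * ((256) / ((n:ℝ) * ((n:ℝ) - 1))^4) := by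
    intro π
    rw [hτ' π]
    field_simp
    ring
  have hpt8 : ∀ π : Perm (Fin n), τ π ^ 8 = ((invC π : ℝ))^0 * (1) + ((invC π : ℝ))^1 * ((-32) / ((n:ℝ) * ((n:ℝ) - 1))^1) + ((invC π : ℝ))^2 * ((448) / ((n:ℝ) * ((n:ℝ) - 1))^2) + ((invC π : ℝ))^3 * ((-3584) / ((n:ℝ) * ((n:ℝ) - 1))^3) + ((invC π : ℝ))^4 * ((17920) / ((n:ℝ) * ((n:ℝ) - 1))^4) + ((invC π : ℝ))^5 * ((-57344) / ((n:ℝ) * ((n:ℝ) - 1))^5) + ((invC π : ℝ))^6 * ((114688) / ((n:ℝ) * ((n:ℝ) - 1))^6) + ((invC π : ℝ))^7 * ((-131072) / ((n:ℝ) * ((n:ℝ) - 1))^7) + ((invC π : ℝ))^8 * ((65536) / ((n:ℝ) * ((n:ℝ) - 1))^8) := by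
    intro π
    rw [hτ' π]
    field_simp
    ring
  have hs4 : ∑ π : Perm (Fin n), τ π ^ 4 = (n.factorial : ℝ) * ((1) + P1 (n:ℝ) * ((-16) / ((n:ℝ) * ((n:ℝ) - 1))^1) + P2 (n:ℝ) * ((96) / ((n:ℝ) * ((n:ℝ) - 1))^2) + P3 (n:ℝ) * ((-256) / ((n:ℝ) * ((n:ℝ) - 1))^3) + P4 (n:ℝ) * ((256) / ((n:ℝ) * ((n:ℝ) - 1))^4)) := by
    rw [Finset.sum_congr rfl (fun π _ => hpt4 π)]
    simp only [Finset.sum_add_distrib, ← Finset.sum_mul]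
    rw [h0, h1, h2, h3, h4]
    ring
  have hs8 : ∑ π : Perm (Fin n), τ π ^ 8 = (n.factorial : ℝ) * ((1) + P1 (n:ℝ) * ((-32) / ((n:ℝ) * ((n:ℝ) - 1))^1) + P2 (n:ℝ) * ((448) / ((n:ℝ) * ((n:ℝ) - 1))^2) + P3 (n:ℝ) * ((-3584) / ((n:ℝ) * ((n:ℝ) - 1))^3) + P4 (n:ℝ) * ((17920) / ((n:ℝ) * ((n:ℝ) - 1))^4) + P5 (n:ℝ) * ((-57344) / ((n:ℝ) * ((n:ℝ) - 1))^5) + P6 (n:ℝ) * ((114688) / ((n:ℝ) * ((n:ℝ) - 1))^6) + P7 (n:ℝ) * ((-131072) / ((n:ℝ) * ((n:ℝ) - 1))^7) + P8 (n:ℝ) * ((65536) / ((n:ℝ) * ((n:ℝ) - 1))^8)) := by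
    rw [Finset.sum_congr rfl (fun π _ => hpt8 π)]
    simp only [Finset.sum_add_distrib, ← Finset.sum_mul]
    rw [h0, h1, h2, h3, h4, h5, h6, h7, h8]
    ring
  have e4 : M 4 = ((496/225) * (n:ℝ)^1 + (100/27) * (n:ℝ)^2 + (-232/45) * (n:ℝ)^3 + (-364/135) * (n:ℝ)^4 + (304/225) * (n:ℝ)^5 + (16/27) * (n:ℝ)^6) / ((n:ℝ)^4 * ((n:ℝ) - 1)^4) := by
    rw [hM 4, hs4, one_div, inv_mul_cancel_left₀ hfact]
    simp only [P1, P2, P3, P4]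
    field_simp
    ring
  have e8 : M 8 = ((63488/225) * (n:ℝ)^1 + (141124352/212625) * (n:ℝ)^2 + (1825664/8505) * (n:ℝ)^3 + (-286545712/382725) * (n:ℝ)^4 + (-16542016/18225) * (n:ℝ)^5 + (-7121248/273375) * (n:ℝ)^6 + (590912/1215) * (n:ℝ)^7 + (21545584/127575) * (n:ℝ)^8 + (-4108928/42525) * (n:ℝ)^9 + (-91349632/1913625) * (n:ℝ)^10 + (25088/3645) * (n:ℝ)^11 + (8960/2187) * (n:ℝ)^12) / ((n:ℝ)^8 * ((n:ℝ) - 1)^8) := by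
    rw [hM 8, hs8, one_div, inv_mul_cancel_left₀ hfact]
    simp only [P1, P2, P3, P4, P5, P6, P7, P8]
    field_simp
    ring
  rw [e4, e8, div_pow]
  rw [show (((n:ℝ)^4 * ((n:ℝ) - 1)^4)^2) = (n:ℝ)^8 * ((n:ℝ) - 1)^8 from by ring]
  rw [div_sub_div_same, div_eq_div_iff (by positivity) ?hpos]
  case hpos =>
    have h1 : (0:ℝ) < (n:ℝ) := by linarith
    have h2 : (0:ℝ) < (n:ℝ) - 1 := by linarith
    positivity
  ring
end
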